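/- arXiv:1803.00979 — 4 statements merged into one kernel-verified Lean document; each statement's English description precedes it below -/
import Mathlib

section
/- There exists an elastic collision system of 3 unit discs in ℝ² on the time interval ℝ which undergoes exactly 4 collisions, no two of them simultaneous, and there exists a time after all four collisions at which the three disc centers are collinear; in particular K(3,2) ≥ 4. -/
open scoped RealInnerProductSpace

noncomputable section

/-- An elastic collision system of unit balls in `ℝ^d`, indexed by `ι`, on the time
interval `I ⊆ ℝ`.  `x i` is the trajectory of the center of ball `i`, `vr i t` its right
derivative (velocity) at time `t` and `vl i t` its left derivative (which, for a
continuous piecewise linear trajectory, is the left limit of the right derivative).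
Fields `right_lin` and `left_lin` say that each trajectory is (locally) linear to the
right and to the left of every time, with the indicated one-sided derivatives; this
encodes continuity and piecewise linearity with locally finitely many breakpoints.
`dist_ge` says the closed unit balls have disjoint interiors, and `collision_rule` is
the elastic collision rule: whenever the right derivative of `x i` changes at a time `t`
(having a left limit in `I`), there is exactly one `j ≠ i` with `‖x i t - x j t‖ = 2`,
the velocity of `x j` also changes at `t`, no other velocity changes at `t`, and with
`u = (x i t - x j t)/2` the usual exchange of normal velocity components holds. -/
structure BallSystem (ι : Type) (d : ℕ) (I : Set ℝ) where
  x : ι → ℝ → EuclideanSpace ℝ (Fin d)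
  vr : ι → ℝ → EuclideanSpace ℝ (Fin d)
  vl : ι → ℝ → EuclideanSpace ℝ (Fin d)
  right_lin : ∀ i, ∀ t ∈ I, ∃ ε > 0, ∀ s ∈ Set.Icc t (t + ε) ∩ I,
    x i s = x i t + (s - t) • vr i t
  left_lin : ∀ i, ∀ t ∈ I, ∃ ε > 0, ∀ s ∈ Set.Icc (t - ε) t ∩ I,
    x i s = x i t + (s - t) • vl i t
  dist_ge : ∀ i j, i ≠ j → ∀ t ∈ I, 2 ≤ ‖x i t - x j t‖
  collision_rule : ∀ i, ∀ t ∈ I, (∃ s ∈ I, s < t) → vr i t ≠ vl i t →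
    ∃ j, j ≠ i ∧ ‖x i t - x j t‖ = 2 ∧ vr j t ≠ vl j t ∧
      (∀ k, k ≠ i → ‖x i t - x k t‖ = 2 → k = j) ∧
      (∀ k, k ≠ i → k ≠ j → vr k t = vl k t) ∧
      vr i t = vl i t -
        ⟪vl i t - vl j t, (2⁻¹ : ℝ) • (x i t - x j t)⟫ • ((2⁻¹ : ℝ) • (x i t - x j t)) ∧
      vr j t = vl j t +
        ⟪vl i t - vl j t, (2⁻¹ : ℝ) • (x i t - x j t)⟫ • ((2⁻¹ : ℝ) • (x i t - x j t))

/-- The set of collisions of the system: pairs `(t, {i,j})` such that at time `t` the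
balls `i` and `j` are tangent and both of their velocities change at `t`. -/
def BallSystem.collisions {ι : Type} [DecidableEq ι] {d : ℕ} {I : Set ℝ}
    (S : BallSystem ι d I) : Set (ℝ × Finset ι) :=
  {p | p.1 ∈ I ∧ (∃ s ∈ I, s < p.1) ∧ ∃ i j : ι, i ≠ j ∧ p.2 = {i, j} ∧
    ‖S.x i p.1 - S.x j p.1‖ = 2 ∧ S.vr i p.1 ≠ S.vl i p.1 ∧ S.vr j p.1 ≠ S.vl j p.1}

/-- `n1 = ⌊n/3⌋`. -/
def nOne (n : ℕ) : ℕ := n / 3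

/-- `n2 = n - 2 n1`. -/
def nTwo (n : ℕ) : ℕ := n - 2 * (n / 3)

/-- `f(n) = n1 (n1+1) n2 + n2 (n2-1)/2 + n1 (n1-1)`. -/
def f (n : ℕ) : ℕ :=
  nOne n * (nOne n + 1) * nTwo n + nTwo n * (nTwo n - 1) / 2 + nOne n * (nOne n - 1)

end


noncomputable section Construction


section Infra

abbrev E2 := EuclideanSpace ℝ (Fin 2)

noncomputable def vec (a b : ℝ) : E2 := WithLp.toLp 2 ![a, b]

lemma vec_eq_iff {a b c d : ℝ} : vec a b = vec c d ↔ a = c ∧ b = d := by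
  constructor
  · intro h; exact ⟨by simpa [vec] using congrArg (fun v : E2 => v 0) h, by simpa [vec] using congrArg (fun v : E2 => v 1) h⟩
  · rintro ⟨rfl, rfl⟩; rfl

lemma vec_add (a b c d : ℝ) : vec a b + vec c d = vec (a+c) (b+d) := by
  ext k; fin_cases k <;> simp [vec]

lemma vec_sub (a b c d : ℝ) : vec a b - vec c d = vec (a-c) (b-d) := by
  ext k; fin_cases k <;> simp [vec]

lemma vec_smul (c a b : ℝ) : c • vec a b = vec (c*a) (c*b) := by
  ext k; fin_cases k <;> simp [vec]

lemma vec_inner (a b c d : ℝ) : ⟪vec a b, vec c d⟫ = a*c + b*d := by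
  simp [vec, PiLp.inner_apply, Fin.sum_univ_two]; ring

lemma norm_vec_eq_two {a b : ℝ} (h : a^2 + b^2 = 4) : ‖vec a b‖ = 2 := by
  rw [EuclideanSpace.norm_eq]
  simp only [vec]
  rw [Fin.sum_univ_two]
  simp only [Matrix.cons_val_zero, Matrix.cons_val_one, Matrix.head_cons]
  rw [show ‖a‖^2 + ‖b‖^2 = 4 by rw [Real.norm_eq_abs, Real.norm_eq_abs, sq_abs, sq_abs]; exact h]
  rw [show (4:ℝ) = 2^2 by norm_num, Real.sqrt_sq (by norm_num)]

lemma norm_vec_eq_two_iff {a b : ℝ} : ‖vec a b‖ = 2 ↔ a^2 + b^2 = 4 := by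
  constructor
  · intro h
    have h2 : ‖vec a b‖^2 = 4 := by rw [h]; norm_num
    rw [EuclideanSpace.norm_eq] at h2
    rw [Fin.sum_univ_two] at h2
    simp only [vec, Matrix.cons_val_zero, Matrix.cons_val_one, Matrix.head_cons] at h2
    rw [Real.sq_sqrt (by positivity)] at h2
    rw [Real.norm_eq_abs, Real.norm_eq_abs, sq_abs, sq_abs] at h2
    exact h2
  · exact norm_vec_eq_two

lemma two_le_norm_vec {a b : ℝ} (h : 4 ≤ a^2 + b^2) : 2 ≤ ‖vec a b‖ := by
  rw [EuclideanSpace.norm_eq, Fin.sum_univ_two]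
  simp only [vec, Matrix.cons_val_zero, Matrix.cons_val_one, Matrix.head_cons]
  rw [Real.norm_eq_abs, Real.norm_eq_abs, sq_abs, sq_abs]
  have := Real.sqrt_le_sqrt (show (4:ℝ) ≤ a^2+b^2 from h)
  rw [show (4:ℝ) = 2^2 by norm_num, Real.sqrt_sq (by norm_num)] at this
  exact this

/-- ramp function -/
noncomputable def Rmp (s : ℝ) : ℝ := max s 0

lemma Rmp_le {t T : ℝ} (h : t ≤ T) : Rmp (t - T) = 0 := by
  simp [Rmp, max_eq_right, sub_nonpos.mpr h]

lemma Rmp_ge {t T : ℝ} (h : T ≤ t) : Rmp (t - T) = t - T := by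
  simp [Rmp, max_eq_left, sub_nonneg.mpr h]

noncomputable def stR (T t : ℝ) : ℝ := if T ≤ t then 1 else 0
noncomputable def stL (T t : ℝ) : ℝ := if T < t then 1 else 0

lemma st_eq {t : ℝ} (T : ℝ) (h : t ≠ T) : stR T t = stL T t := by
  unfold stR stL
  rcases lt_trichotomy T t with hh|hh|hh
  · rw [if_pos hh.le, if_pos hh]
  · exact absurd hh.symm h
  · rw [if_neg (not_le.mpr hh), if_neg (by linarith)]

noncomputable def traj (P V W1 W2 W3 : E2) (a b c : ℝ) (t : ℝ) : E2 :=
  P + t • V + Rmp (t - a) • W1 + Rmp (t - b) • W2 + Rmp (t - c) • W3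

noncomputable def velR (V W1 W2 W3 : E2) (a b c : ℝ) (t : ℝ) : E2 :=
  V + stR a t • W1 + stR b t • W2 + stR c t • W3

noncomputable def velL (V W1 W2 W3 : E2) (a b c : ℝ) (t : ℝ) : E2 :=
  V + stL a t • W1 + stL b t • W2 + stL c t • W3

lemma ramp_right (T t : ℝ) : ∃ ε > 0, ∀ s, t ≤ s → s ≤ t + ε →
    Rmp (s - T) = Rmp (t - T) + (s - t) * stR T t := by
  by_cases h : T ≤ t
  · exact ⟨1, by norm_num, fun s hs1 _ => by
      rw [Rmp_ge h, Rmp_ge (le_trans h hs1), stR, if_pos h]; ring⟩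
  · push_neg at h
    exact ⟨T - t, by linarith, fun s hs1 hs2 => by
      rw [Rmp_le (le_of_lt h), Rmp_le (by linarith), stR, if_neg (not_le.mpr h)]; ring⟩

lemma ramp_left (T t : ℝ) : ∃ ε > 0, ∀ s, t - ε ≤ s → s ≤ t →
    Rmp (s - T) = Rmp (t - T) + (s - t) * stL T t := by
  by_cases h : T < t
  · exact ⟨t - T, by linarith, fun s hs1 hs2 => by
      rw [Rmp_ge h.le, Rmp_ge (by linarith), stL, if_pos h]; ring⟩
  · push_neg at h
    exact ⟨1, by norm_num, fun s hs1 hs2 => by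
      rw [Rmp_le (le_trans hs2 h), Rmp_le h, stL, if_neg (not_lt.mpr h)]; ring⟩

lemma traj_right (P V W1 W2 W3 : E2) (a b c : ℝ) (t : ℝ) :
    ∃ ε > 0, ∀ s ∈ Set.Icc t (t + ε) ∩ Set.univ,
      traj P V W1 W2 W3 a b c s =
        traj P V W1 W2 W3 a b c t + (s - t) • velR V W1 W2 W3 a b c t := by
  obtain ⟨e1, he1, h1⟩ := ramp_right a t
  obtain ⟨e2, he2, h2⟩ := ramp_right b t
  obtain ⟨e3, he3, h3⟩ := ramp_right c t
  refine ⟨min e1 (min e2 e3), by positivity, ?_⟩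
  rintro s ⟨⟨hs1, hs2⟩, -⟩
  have k1 := h1 s hs1 (by have := min_le_left e1 (min e2 e3); linarith)
  have k2 := h2 s hs1 (by have := le_trans (min_le_right e1 (min e2 e3)) (min_le_left e2 e3); linarith)
  have k3 := h3 s hs1 (by have := le_trans (min_le_right e1 (min e2 e3)) (min_le_right e2 e3); linarith)
  unfold traj velR
  rw [k1, k2, k3]
  module

lemma traj_left (P V W1 W2 W3 : E2) (a b c : ℝ) (t : ℝ) :
    ∃ ε > 0, ∀ s ∈ Set.Icc (t - ε) t ∩ Set.univ,
      traj P V W1 W2 W3 a b c s =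
        traj P V W1 W2 W3 a b c t + (s - t) • velL V W1 W2 W3 a b c t := by
  obtain ⟨e1, he1, h1⟩ := ramp_left a t
  obtain ⟨e2, he2, h2⟩ := ramp_left b t
  obtain ⟨e3, he3, h3⟩ := ramp_left c t
  refine ⟨min e1 (min e2 e3), by positivity, ?_⟩
  rintro s ⟨⟨hs1, hs2⟩, -⟩
  have k1 := h1 s (by have := min_le_left e1 (min e2 e3); linarith) hs2
  have k2 := h2 s (by have := le_trans (min_le_right e1 (min e2 e3)) (min_le_left e2 e3); linarith) hs2
  have k3 := h3 s (by have := le_trans (min_le_right e1 (min e2 e3)) (min_le_right e2 e3); linarith) hs2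
  unfold traj velL
  rw [k1, k2, k3]
  module

end Infra

noncomputable def P0 : E2 := vec ((-16 : ℝ)/15) ((17 : ℝ)/25)
noncomputable def V0 : E2 := vec ((15559729 : ℝ)/5762300) ((4937383 : ℝ)/2881150)
noncomputable def W01 : E2 := vec ((-3481174 : ℝ)/1440575) ((5221761 : ℝ)/2881150)
noncomputable def W02 : E2 := vec ((-6573 : ℝ)/57623) ((6260 : ℝ)/57623)
noncomputable def W03 : E2 := vec ((-45838836 : ℝ)/355822025) ((61118448 : ℝ)/355822025)
noncomputable def x0f : ℝ → E2 := traj P0 V0 W01 W02 W03 (0 : ℝ) ((1 : ℝ)/40) (2 : ℝ)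
noncomputable def vr0f : ℝ → E2 := velR V0 W01 W02 W03 (0 : ℝ) ((1 : ℝ)/40) (2 : ℝ)
noncomputable def vl0f : ℝ → E2 := velL V0 W01 W02 W03 (0 : ℝ) ((1 : ℝ)/40) (2 : ℝ)
noncomputable def P1 : E2 := vec ((8 : ℝ)/15) ((-13 : ℝ)/25)
noncomputable def V1 : E2 := vec ((-9833463 : ℝ)/5762300) ((251348 : ℝ)/288115)
noncomputable def W11 : E2 := vec ((3481174 : ℝ)/1440575) ((-5221761 : ℝ)/2881150)
noncomputable def W12 : E2 := vec ((-32265 : ℝ)/3974) ((-53775 : ℝ)/15896)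
noncomputable def W13 : E2 := vec ((6573 : ℝ)/57623) ((-6260 : ℝ)/57623)
noncomputable def x1f : ℝ → E2 := traj P1 V1 W11 W12 W13 (0 : ℝ) ((1 : ℝ)/200) ((1 : ℝ)/40)
noncomputable def vr1f : ℝ → E2 := velR V1 W11 W12 W13 (0 : ℝ) ((1 : ℝ)/200) ((1 : ℝ)/40)
noncomputable def vl1f : ℝ → E2 := velL V1 W11 W12 W13 (0 : ℝ) ((1 : ℝ)/200) ((1 : ℝ)/40)
noncomputable def P2 : E2 := vec ((133485899 : ℝ)/54968368) ((1353055919 : ℝ)/5496836800)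
noncomputable def V2 : E2 := vec ((-9353378851 : ℝ)/1030656900) ((-222754699 : ℝ)/687104600)
noncomputable def W21 : E2 := vec ((32265 : ℝ)/3974) ((53775 : ℝ)/15896)
noncomputable def W22 : E2 := vec ((45838836 : ℝ)/355822025) ((-61118448 : ℝ)/355822025)
noncomputable def W23 : E2 := vec (0 : ℝ) (0 : ℝ)
noncomputable def x2f : ℝ → E2 := traj P2 V2 W21 W22 W23 ((1 : ℝ)/200) (2 : ℝ) (3 : ℝ)
noncomputable def vr2f : ℝ → E2 := velR V2 W21 W22 W23 ((1 : ℝ)/200) (2 : ℝ) (3 : ℝ)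
noncomputable def vl2f : ℝ → E2 := velL V2 W21 W22 W23 ((1 : ℝ)/200) (2 : ℝ) (3 : ℝ)

lemma W23_smul (r : ℝ) : r • W23 = 0 := by
  ext k; fin_cases k <;> simp [W23, vec]

lemma diff01 (t : ℝ) : x0f t - x1f t = vec (((-8 : ℝ)/5) + ((6348298 : ℝ)/1440575) * t + ((-6962348 : ℝ)/1440575) * Rmp (t - (0 : ℝ)) + ((32265 : ℝ)/3974) * Rmp (t - ((1 : ℝ)/200)) + ((-13146 : ℝ)/57623) * Rmp (t - ((1 : ℝ)/40)) + ((-45838836 : ℝ)/355822025) * Rmp (t - (2 : ℝ))) (((6 : ℝ)/5) + ((2423903 : ℝ)/2881150) * t + ((5221761 : ℝ)/1440575) * Rmp (t - (0 : ℝ)) + ((53775 : ℝ)/15896) * Rmp (t - ((1 : ℝ)/200)) + ((12520 : ℝ)/57623) * Rmp (t - ((1 : ℝ)/40)) + ((61118448 : ℝ)/355822025) * Rmp (t - (2 : ℝ))) := by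
  simp only [x0f, x1f, traj, P0, P1, V0, V1, W01, W02, W03, W11, W12, W13, vec_smul, vec_add, vec_sub]
  rw [vec_eq_iff]
  constructor <;> ring

lemma diff02 (t : ℝ) : x0f t - x2f t = vec (((-2881782373 : ℝ)/824525520) + ((175978150501 : ℝ)/14944525050) * t + ((-3481174 : ℝ)/1440575) * Rmp (t - (0 : ℝ)) + ((-32265 : ℝ)/3974) * Rmp (t - ((1 : ℝ)/200)) + ((-6573 : ℝ)/57623) * Rmp (t - ((1 : ℝ)/40)) + ((-91677672 : ℝ)/355822025) * Rmp (t - (2 : ℝ))) (((476958621 : ℝ)/1099367360) + ((40606827099 : ℝ)/19926033400) * t + ((5221761 : ℝ)/2881150) * Rmp (t - (0 : ℝ)) + ((-53775 : ℝ)/15896) * Rmp (t - ((1 : ℝ)/200)) + ((6260 : ℝ)/57623) * Rmp (t - ((1 : ℝ)/40)) + ((122236896 : ℝ)/355822025) * Rmp (t - (2 : ℝ))) := by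
  simp only [x0f, x2f, traj, P0, P2, V0, V2, W01, W02, W03, W21, W22, W23, vec_smul, vec_add, vec_sub]
  rw [vec_eq_iff]
  constructor <;> ring

lemma diff12 (t : ℝ) : x1f t - x2f t = vec (((-1562541541 : ℝ)/824525520) + ((110120907049 : ℝ)/14944525050) * t + ((3481174 : ℝ)/1440575) * Rmp (t - (0 : ℝ)) + ((-32265 : ℝ)/1987) * Rmp (t - ((1 : ℝ)/200)) + ((6573 : ℝ)/57623) * Rmp (t - ((1 : ℝ)/40)) + ((-45838836 : ℝ)/355822025) * Rmp (t - (2 : ℝ))) (((-842282211 : ℝ)/1099367360) + ((23843113951 : ℝ)/19926033400) * t + ((-5221761 : ℝ)/2881150) * Rmp (t - (0 : ℝ)) + ((-53775 : ℝ)/7948) * Rmp (t - ((1 : ℝ)/200)) + ((-6260 : ℝ)/57623) * Rmp (t - ((1 : ℝ)/40)) + ((61118448 : ℝ)/355822025) * Rmp (t - (2 : ℝ))) := by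
  simp only [x1f, x2f, traj, P1, P2, V1, V2, W11, W12, W13, W21, W22, W23, vec_smul, vec_add, vec_sub]
  rw [vec_eq_iff]
  constructor <;> ring

lemma diff10 (t : ℝ) : x1f t - x0f t = vec (((8 : ℝ)/5) + ((-6348298 : ℝ)/1440575) * t + ((6962348 : ℝ)/1440575) * Rmp (t - (0 : ℝ)) + ((-32265 : ℝ)/3974) * Rmp (t - ((1 : ℝ)/200)) + ((13146 : ℝ)/57623) * Rmp (t - ((1 : ℝ)/40)) + ((45838836 : ℝ)/355822025) * Rmp (t - (2 : ℝ))) (((-6 : ℝ)/5) + ((-2423903 : ℝ)/2881150) * t + ((-5221761 : ℝ)/1440575) * Rmp (t - (0 : ℝ)) + ((-53775 : ℝ)/15896) * Rmp (t - ((1 : ℝ)/200)) + ((-12520 : ℝ)/57623) * Rmp (t - ((1 : ℝ)/40)) + ((-61118448 : ℝ)/355822025) * Rmp (t - (2 : ℝ))) := by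
  simp only [x1f, x0f, traj, P1, P0, V1, V0, W11, W12, W13, W01, W02, W03, vec_smul, vec_add, vec_sub]
  rw [vec_eq_iff]
  constructor <;> ring

lemma diff20 (t : ℝ) : x2f t - x0f t = vec (((2881782373 : ℝ)/824525520) + ((-175978150501 : ℝ)/14944525050) * t + ((3481174 : ℝ)/1440575) * Rmp (t - (0 : ℝ)) + ((32265 : ℝ)/3974) * Rmp (t - ((1 : ℝ)/200)) + ((6573 : ℝ)/57623) * Rmp (t - ((1 : ℝ)/40)) + ((91677672 : ℝ)/355822025) * Rmp (t - (2 : ℝ))) (((-476958621 : ℝ)/1099367360) + ((-40606827099 : ℝ)/19926033400) * t + ((-5221761 : ℝ)/2881150) * Rmp (t - (0 : ℝ)) + ((53775 : ℝ)/15896) * Rmp (t - ((1 : ℝ)/200)) + ((-6260 : ℝ)/57623) * Rmp (t - ((1 : ℝ)/40)) + ((-122236896 : ℝ)/355822025) * Rmp (t - (2 : ℝ))) := by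
  simp only [x2f, x0f, traj, P2, P0, V2, V0, W21, W22, W23, W01, W02, W03, vec_smul, vec_add, vec_sub]
  rw [vec_eq_iff]
  constructor <;> ring

lemma diff21 (t : ℝ) : x2f t - x1f t = vec (((1562541541 : ℝ)/824525520) + ((-110120907049 : ℝ)/14944525050) * t + ((-3481174 : ℝ)/1440575) * Rmp (t - (0 : ℝ)) + ((32265 : ℝ)/1987) * Rmp (t - ((1 : ℝ)/200)) + ((-6573 : ℝ)/57623) * Rmp (t - ((1 : ℝ)/40)) + ((45838836 : ℝ)/355822025) * Rmp (t - (2 : ℝ))) (((842282211 : ℝ)/1099367360) + ((-23843113951 : ℝ)/19926033400) * t + ((5221761 : ℝ)/2881150) * Rmp (t - (0 : ℝ)) + ((53775 : ℝ)/7948) * Rmp (t - ((1 : ℝ)/200)) + ((6260 : ℝ)/57623) * Rmp (t - ((1 : ℝ)/40)) + ((-61118448 : ℝ)/355822025) * Rmp (t - (2 : ℝ))) := by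
  simp only [x2f, x1f, traj, P2, P1, V2, V1, W21, W22, W23, W11, W12, W13, vec_smul, vec_add, vec_sub]
  rw [vec_eq_iff]
  constructor <;> ring

lemma dval01_e1 : x0f (0 : ℝ) - x1f (0 : ℝ) = vec ((-8 : ℝ)/5) ((6 : ℝ)/5) := by
  rw [diff01, Rmp_le (by norm_num : ((0 : ℝ)) ≤ (0 : ℝ)), Rmp_le (by norm_num : ((0 : ℝ)) ≤ ((1 : ℝ)/200)), Rmp_le (by norm_num : ((0 : ℝ)) ≤ ((1 : ℝ)/40)), Rmp_le (by norm_num : ((0 : ℝ)) ≤ (2 : ℝ)), vec_eq_iff]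
  constructor <;> norm_num

lemma dval02_e1 : x0f (0 : ℝ) - x2f (0 : ℝ) = vec ((-2881782373 : ℝ)/824525520) ((476958621 : ℝ)/1099367360) := by
  rw [diff02, Rmp_le (by norm_num : ((0 : ℝ)) ≤ (0 : ℝ)), Rmp_le (by norm_num : ((0 : ℝ)) ≤ ((1 : ℝ)/200)), Rmp_le (by norm_num : ((0 : ℝ)) ≤ ((1 : ℝ)/40)), Rmp_le (by norm_num : ((0 : ℝ)) ≤ (2 : ℝ)), vec_eq_iff]
  constructor <;> norm_num

lemma dval12_e1 : x1f (0 : ℝ) - x2f (0 : ℝ) = vec ((-1562541541 : ℝ)/824525520) ((-842282211 : ℝ)/1099367360) := by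
  rw [diff12, Rmp_le (by norm_num : ((0 : ℝ)) ≤ (0 : ℝ)), Rmp_le (by norm_num : ((0 : ℝ)) ≤ ((1 : ℝ)/200)), Rmp_le (by norm_num : ((0 : ℝ)) ≤ ((1 : ℝ)/40)), Rmp_le (by norm_num : ((0 : ℝ)) ≤ (2 : ℝ)), vec_eq_iff]
  constructor <;> norm_num

lemma dval10_e1 : x1f (0 : ℝ) - x0f (0 : ℝ) = vec ((8 : ℝ)/5) ((-6 : ℝ)/5) := by
  rw [diff10, Rmp_le (by norm_num : ((0 : ℝ)) ≤ (0 : ℝ)), Rmp_le (by norm_num : ((0 : ℝ)) ≤ ((1 : ℝ)/200)), Rmp_le (by norm_num : ((0 : ℝ)) ≤ ((1 : ℝ)/40)), Rmp_le (by norm_num : ((0 : ℝ)) ≤ (2 : ℝ)), vec_eq_iff]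
  constructor <;> norm_num

lemma dval20_e1 : x2f (0 : ℝ) - x0f (0 : ℝ) = vec ((2881782373 : ℝ)/824525520) ((-476958621 : ℝ)/1099367360) := by
  rw [diff20, Rmp_le (by norm_num : ((0 : ℝ)) ≤ (0 : ℝ)), Rmp_le (by norm_num : ((0 : ℝ)) ≤ ((1 : ℝ)/200)), Rmp_le (by norm_num : ((0 : ℝ)) ≤ ((1 : ℝ)/40)), Rmp_le (by norm_num : ((0 : ℝ)) ≤ (2 : ℝ)), vec_eq_iff]
  constructor <;> norm_num

lemma dval21_e1 : x2f (0 : ℝ) - x1f (0 : ℝ) = vec ((1562541541 : ℝ)/824525520) ((842282211 : ℝ)/1099367360) := by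
  rw [diff21, Rmp_le (by norm_num : ((0 : ℝ)) ≤ (0 : ℝ)), Rmp_le (by norm_num : ((0 : ℝ)) ≤ ((1 : ℝ)/200)), Rmp_le (by norm_num : ((0 : ℝ)) ≤ ((1 : ℝ)/40)), Rmp_le (by norm_num : ((0 : ℝ)) ≤ (2 : ℝ)), vec_eq_iff]
  constructor <;> norm_num

lemma dval01_e2 : x0f ((1 : ℝ)/200) - x1f ((1 : ℝ)/200) = vec ((-9231961 : ℝ)/5762300) ((28173737 : ℝ)/23049200) := by
  rw [diff01, Rmp_ge (by norm_num : ((0 : ℝ)) ≤ ((1 : ℝ)/200)), Rmp_le (by norm_num : (((1 : ℝ)/200)) ≤ ((1 : ℝ)/200)), Rmp_le (by norm_num : (((1 : ℝ)/200)) ≤ ((1 : ℝ)/40)), Rmp_le (by norm_num : (((1 : ℝ)/200)) ≤ (2 : ℝ)), vec_eq_iff]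
  constructor <;> norm_num

lemma dval02_e2 : x0f ((1 : ℝ)/200) - x2f ((1 : ℝ)/200) = vec ((-258310693 : ℝ)/74909900) ((135766581 : ℝ)/299639600) := by
  rw [diff02, Rmp_ge (by norm_num : ((0 : ℝ)) ≤ ((1 : ℝ)/200)), Rmp_le (by norm_num : (((1 : ℝ)/200)) ≤ ((1 : ℝ)/200)), Rmp_le (by norm_num : (((1 : ℝ)/200)) ≤ ((1 : ℝ)/40)), Rmp_le (by norm_num : (((1 : ℝ)/200)) ≤ (2 : ℝ)), vec_eq_iff]
  constructor <;> norm_num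

lemma dval12_e2 : x1f ((1 : ℝ)/200) - x2f ((1 : ℝ)/200) = vec ((-24 : ℝ)/13) ((-10 : ℝ)/13) := by
  rw [diff12, Rmp_ge (by norm_num : ((0 : ℝ)) ≤ ((1 : ℝ)/200)), Rmp_le (by norm_num : (((1 : ℝ)/200)) ≤ ((1 : ℝ)/200)), Rmp_le (by norm_num : (((1 : ℝ)/200)) ≤ ((1 : ℝ)/40)), Rmp_le (by norm_num : (((1 : ℝ)/200)) ≤ (2 : ℝ)), vec_eq_iff]
  constructor <;> norm_num

lemma dval10_e2 : x1f ((1 : ℝ)/200) - x0f ((1 : ℝ)/200) = vec ((9231961 : ℝ)/5762300) ((-28173737 : ℝ)/23049200) := by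
  rw [diff10, Rmp_ge (by norm_num : ((0 : ℝ)) ≤ ((1 : ℝ)/200)), Rmp_le (by norm_num : (((1 : ℝ)/200)) ≤ ((1 : ℝ)/200)), Rmp_le (by norm_num : (((1 : ℝ)/200)) ≤ ((1 : ℝ)/40)), Rmp_le (by norm_num : (((1 : ℝ)/200)) ≤ (2 : ℝ)), vec_eq_iff]
  constructor <;> norm_num

lemma dval20_e2 : x2f ((1 : ℝ)/200) - x0f ((1 : ℝ)/200) = vec ((258310693 : ℝ)/74909900) ((-135766581 : ℝ)/299639600) := by
  rw [diff20, Rmp_ge (by norm_num : ((0 : ℝ)) ≤ ((1 : ℝ)/200)), Rmp_le (by norm_num : (((1 : ℝ)/200)) ≤ ((1 : ℝ)/200)), Rmp_le (by norm_num : (((1 : ℝ)/200)) ≤ ((1 : ℝ)/40)), Rmp_le (by norm_num : (((1 : ℝ)/200)) ≤ (2 : ℝ)), vec_eq_iff]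
  constructor <;> norm_num

lemma dval21_e2 : x2f ((1 : ℝ)/200) - x1f ((1 : ℝ)/200) = vec ((24 : ℝ)/13) ((10 : ℝ)/13) := by
  rw [diff21, Rmp_ge (by norm_num : ((0 : ℝ)) ≤ ((1 : ℝ)/200)), Rmp_le (by norm_num : (((1 : ℝ)/200)) ≤ ((1 : ℝ)/200)), Rmp_le (by norm_num : (((1 : ℝ)/200)) ≤ ((1 : ℝ)/40)), Rmp_le (by norm_num : (((1 : ℝ)/200)) ≤ (2 : ℝ)), vec_eq_iff]
  constructor <;> norm_num

lemma dval01_e3 : x0f ((1 : ℝ)/40) - x1f ((1 : ℝ)/40) = vec ((-42 : ℝ)/29) ((40 : ℝ)/29) := by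
  rw [diff01, Rmp_ge (by norm_num : ((0 : ℝ)) ≤ ((1 : ℝ)/40)), Rmp_ge (by norm_num : (((1 : ℝ)/200)) ≤ ((1 : ℝ)/40)), Rmp_le (by norm_num : (((1 : ℝ)/40)) ≤ ((1 : ℝ)/40)), Rmp_le (by norm_num : (((1 : ℝ)/40)) ≤ (2 : ℝ)), vec_eq_iff]
  constructor <;> norm_num

lemma dval02_e3 : x0f ((1 : ℝ)/40) - x2f ((1 : ℝ)/40) = vec ((-20464957309 : ℝ)/5977810020) ((3685888809 : ℝ)/7970413360) := by
  rw [diff02, Rmp_ge (by norm_num : ((0 : ℝ)) ≤ ((1 : ℝ)/40)), Rmp_ge (by norm_num : (((1 : ℝ)/200)) ≤ ((1 : ℝ)/40)), Rmp_le (by norm_num : (((1 : ℝ)/40)) ≤ ((1 : ℝ)/40)), Rmp_le (by norm_num : (((1 : ℝ)/40)) ≤ (2 : ℝ)), vec_eq_iff]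
  constructor <;> norm_num

lemma dval12_e3 : x1f ((1 : ℝ)/40) - x2f ((1 : ℝ)/40) = vec ((-407153081 : ℝ)/206131380) ((-251992579 : ℝ)/274841840) := by
  rw [diff12, Rmp_ge (by norm_num : ((0 : ℝ)) ≤ ((1 : ℝ)/40)), Rmp_ge (by norm_num : (((1 : ℝ)/200)) ≤ ((1 : ℝ)/40)), Rmp_le (by norm_num : (((1 : ℝ)/40)) ≤ ((1 : ℝ)/40)), Rmp_le (by norm_num : (((1 : ℝ)/40)) ≤ (2 : ℝ)), vec_eq_iff]
  constructor <;> norm_num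

lemma dval10_e3 : x1f ((1 : ℝ)/40) - x0f ((1 : ℝ)/40) = vec ((42 : ℝ)/29) ((-40 : ℝ)/29) := by
  rw [diff10, Rmp_ge (by norm_num : ((0 : ℝ)) ≤ ((1 : ℝ)/40)), Rmp_ge (by norm_num : (((1 : ℝ)/200)) ≤ ((1 : ℝ)/40)), Rmp_le (by norm_num : (((1 : ℝ)/40)) ≤ ((1 : ℝ)/40)), Rmp_le (by norm_num : (((1 : ℝ)/40)) ≤ (2 : ℝ)), vec_eq_iff]
  constructor <;> norm_num

lemma dval20_e3 : x2f ((1 : ℝ)/40) - x0f ((1 : ℝ)/40) = vec ((20464957309 : ℝ)/5977810020) ((-3685888809 : ℝ)/7970413360) := by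
  rw [diff20, Rmp_ge (by norm_num : ((0 : ℝ)) ≤ ((1 : ℝ)/40)), Rmp_ge (by norm_num : (((1 : ℝ)/200)) ≤ ((1 : ℝ)/40)), Rmp_le (by norm_num : (((1 : ℝ)/40)) ≤ ((1 : ℝ)/40)), Rmp_le (by norm_num : (((1 : ℝ)/40)) ≤ (2 : ℝ)), vec_eq_iff]
  constructor <;> norm_num

lemma dval21_e3 : x2f ((1 : ℝ)/40) - x1f ((1 : ℝ)/40) = vec ((407153081 : ℝ)/206131380) ((251992579 : ℝ)/274841840) := by
  rw [diff21, Rmp_ge (by norm_num : ((0 : ℝ)) ≤ ((1 : ℝ)/40)), Rmp_ge (by norm_num : (((1 : ℝ)/200)) ≤ ((1 : ℝ)/40)), Rmp_le (by norm_num : (((1 : ℝ)/40)) ≤ ((1 : ℝ)/40)), Rmp_le (by norm_num : (((1 : ℝ)/40)) ≤ (2 : ℝ)), vec_eq_iff]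
  constructor <;> norm_num

lemma dval01_e4 : x0f (2 : ℝ) - x1f (2 : ℝ) = vec ((61284931 : ℝ)/4609840) ((319189017 : ℝ)/18439360) := by
  rw [diff01, Rmp_ge (by norm_num : ((0 : ℝ)) ≤ (2 : ℝ)), Rmp_ge (by norm_num : (((1 : ℝ)/200)) ≤ (2 : ℝ)), Rmp_ge (by norm_num : (((1 : ℝ)/40)) ≤ (2 : ℝ)), Rmp_le (by norm_num : ((2 : ℝ)) ≤ (2 : ℝ)), vec_eq_iff]
  constructor <;> norm_num

lemma dval02_e4 : x0f (2 : ℝ) - x2f (2 : ℝ) = vec ((-6 : ℝ)/5) ((8 : ℝ)/5) := by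
  rw [diff02, Rmp_ge (by norm_num : ((0 : ℝ)) ≤ (2 : ℝ)), Rmp_ge (by norm_num : (((1 : ℝ)/200)) ≤ (2 : ℝ)), Rmp_ge (by norm_num : (((1 : ℝ)/40)) ≤ (2 : ℝ)), Rmp_le (by norm_num : ((2 : ℝ)) ≤ (2 : ℝ)), vec_eq_iff]
  constructor <;> norm_num

lemma dval12_e4 : x1f (2 : ℝ) - x2f (2 : ℝ) = vec ((-66816739 : ℝ)/4609840) ((-289686041 : ℝ)/18439360) := by
  rw [diff12, Rmp_ge (by norm_num : ((0 : ℝ)) ≤ (2 : ℝ)), Rmp_ge (by norm_num : (((1 : ℝ)/200)) ≤ (2 : ℝ)), Rmp_ge (by norm_num : (((1 : ℝ)/40)) ≤ (2 : ℝ)), Rmp_le (by norm_num : ((2 : ℝ)) ≤ (2 : ℝ)), vec_eq_iff]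
  constructor <;> norm_num

lemma dval10_e4 : x1f (2 : ℝ) - x0f (2 : ℝ) = vec ((-61284931 : ℝ)/4609840) ((-319189017 : ℝ)/18439360) := by
  rw [diff10, Rmp_ge (by norm_num : ((0 : ℝ)) ≤ (2 : ℝ)), Rmp_ge (by norm_num : (((1 : ℝ)/200)) ≤ (2 : ℝ)), Rmp_ge (by norm_num : (((1 : ℝ)/40)) ≤ (2 : ℝ)), Rmp_le (by norm_num : ((2 : ℝ)) ≤ (2 : ℝ)), vec_eq_iff]
  constructor <;> norm_num

lemma dval20_e4 : x2f (2 : ℝ) - x0f (2 : ℝ) = vec ((6 : ℝ)/5) ((-8 : ℝ)/5) := by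
  rw [diff20, Rmp_ge (by norm_num : ((0 : ℝ)) ≤ (2 : ℝ)), Rmp_ge (by norm_num : (((1 : ℝ)/200)) ≤ (2 : ℝ)), Rmp_ge (by norm_num : (((1 : ℝ)/40)) ≤ (2 : ℝ)), Rmp_le (by norm_num : ((2 : ℝ)) ≤ (2 : ℝ)), vec_eq_iff]
  constructor <;> norm_num

lemma dval21_e4 : x2f (2 : ℝ) - x1f (2 : ℝ) = vec ((66816739 : ℝ)/4609840) ((289686041 : ℝ)/18439360) := by
  rw [diff21, Rmp_ge (by norm_num : ((0 : ℝ)) ≤ (2 : ℝ)), Rmp_ge (by norm_num : (((1 : ℝ)/200)) ≤ (2 : ℝ)), Rmp_ge (by norm_num : (((1 : ℝ)/40)) ≤ (2 : ℝ)), Rmp_le (by norm_num : ((2 : ℝ)) ≤ (2 : ℝ)), vec_eq_iff]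
  constructor <;> norm_num

lemma vr0_e1 : vr0f (0 : ℝ) = vec ((1635033 : ℝ)/5762300) ((5079572 : ℝ)/1440575) := by
  norm_num [vr0f, velR, stR, V0, W01, W02, W03, vec_smul, vec_add, vec_eq_iff, one_smul, zero_smul, add_zero, zero_add]

lemma vl0_e1 : vl0f (0 : ℝ) = vec ((15559729 : ℝ)/5762300) ((4937383 : ℝ)/2881150) := by
  norm_num [vl0f, velL, stL, V0, W01, W02, W03, vec_smul, vec_add, vec_eq_iff, one_smul, zero_smul, add_zero, zero_add]

lemma vr1_e1 : vr1f (0 : ℝ) = vec ((71 : ℝ)/100) ((-47 : ℝ)/50) := by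
  norm_num [vr1f, velR, stR, V1, W11, W12, W13, vec_smul, vec_add, vec_eq_iff, one_smul, zero_smul, add_zero, zero_add]

lemma vl1_e1 : vl1f (0 : ℝ) = vec ((-9833463 : ℝ)/5762300) ((251348 : ℝ)/288115) := by
  norm_num [vl1f, velL, stL, V1, W11, W12, W13, vec_smul, vec_add, vec_eq_iff, one_smul, zero_smul, add_zero, zero_add]

lemma vr1_e2 : vr1f ((1 : ℝ)/200) = vec ((-1472173 : ℝ)/198700) ((-1717931 : ℝ)/397400) := by
  norm_num [vr1f, velR, stR, V1, W11, W12, W13, vec_smul, vec_add, vec_eq_iff, one_smul, zero_smul, add_zero, zero_add]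

lemma vl1_e2 : vl1f ((1 : ℝ)/200) = vec ((71 : ℝ)/100) ((-47 : ℝ)/50) := by
  norm_num [vl1f, velL, stL, V1, W11, W12, W13, vec_smul, vec_add, vec_eq_iff, one_smul, zero_smul, add_zero, zero_add]

lemma vr2_e2 : vr2f ((1 : ℝ)/200) = vec ((-985451101 : ℝ)/1030656900) ((525417419 : ℝ)/171776150) := by
  norm_num [vr2f, velR, stR, V2, W21, W22, W23, vec_smul, vec_add, vec_eq_iff, one_smul, zero_smul, add_zero, zero_add]

lemma vl2_e2 : vl2f ((1 : ℝ)/200) = vec ((-9353378851 : ℝ)/1030656900) ((-222754699 : ℝ)/687104600) := by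
  norm_num [vl2f, velL, stL, V2, W21, W22, W23, vec_smul, vec_add, vec_eq_iff, one_smul, zero_smul, add_zero, zero_add]

lemma vr0_e3 : vr0f ((1 : ℝ)/40) = vec ((977733 : ℝ)/5762300) ((5236072 : ℝ)/1440575) := by
  norm_num [vr0f, velR, stR, V0, W01, W02, W03, vec_smul, vec_add, vec_eq_iff, one_smul, zero_smul, add_zero, zero_add]

lemma vl0_e3 : vl0f ((1 : ℝ)/40) = vec ((1635033 : ℝ)/5762300) ((5079572 : ℝ)/1440575) := by
  norm_num [vl0f, velL, stL, V0, W01, W02, W03, vec_smul, vec_add, vec_eq_iff, one_smul, zero_smul, add_zero, zero_add]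

lemma vr1_e3 : vr1f ((1 : ℝ)/40) = vec ((-42035717 : ℝ)/5762300) ((-51071999 : ℝ)/11524600) := by
  norm_num [vr1f, velR, stR, V1, W11, W12, W13, vec_smul, vec_add, vec_eq_iff, one_smul, zero_smul, add_zero, zero_add]

lemma vl1_e3 : vl1f ((1 : ℝ)/40) = vec ((-1472173 : ℝ)/198700) ((-1717931 : ℝ)/397400) := by
  norm_num [vl1f, velL, stL, V1, W11, W12, W13, vec_smul, vec_add, vec_eq_iff, one_smul, zero_smul, add_zero, zero_add]

lemma vr0_e4 : vr0f (2 : ℝ) = vec ((58144707 : ℝ)/1423288100) ((1354428232 : ℝ)/355822025) := by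
  norm_num [vr0f, velR, stR, V0, W01, W02, W03, vec_smul, vec_add, vec_eq_iff, one_smul, zero_smul, add_zero, zero_add]

lemma vl0_e4 : vl0f (2 : ℝ) = vec ((977733 : ℝ)/5762300) ((5236072 : ℝ)/1440575) := by
  norm_num [vl0f, velL, stL, V0, W01, W02, W03, vec_smul, vec_add, vec_eq_iff, one_smul, zero_smul, add_zero, zero_add]

lemma vr2_e4 : vr2f (2 : ℝ) = vec ((-4945523941 : ℝ)/5977810020) ((14381446879 : ℝ)/4981508350) := by
  norm_num [vr2f, velR, stR, V2, W21, W22, W23, vec_smul, vec_add, vec_eq_iff, one_smul, zero_smul, add_zero, zero_add]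

lemma vl2_e4 : vl2f (2 : ℝ) = vec ((-985451101 : ℝ)/1030656900) ((525417419 : ℝ)/171776150) := by
  norm_num [vl2f, velL, stL, V2, W21, W22, W23, vec_smul, vec_add, vec_eq_iff, one_smul, zero_smul, add_zero, zero_add]

lemma vne0_e1 : vr0f (0 : ℝ) ≠ vl0f (0 : ℝ) := by
  rw [vr0_e1, vl0_e1]
  intro h
  have := (vec_eq_iff.mp h).1
  norm_num at this

lemma vne1_e1 : vr1f (0 : ℝ) ≠ vl1f (0 : ℝ) := by
  rw [vr1_e1, vl1_e1]
  intro h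
  have := (vec_eq_iff.mp h).1
  norm_num at this

lemma vne1_e2 : vr1f ((1 : ℝ)/200) ≠ vl1f ((1 : ℝ)/200) := by
  rw [vr1_e2, vl1_e2]
  intro h
  have := (vec_eq_iff.mp h).1
  norm_num at this

lemma vne2_e2 : vr2f ((1 : ℝ)/200) ≠ vl2f ((1 : ℝ)/200) := by
  rw [vr2_e2, vl2_e2]
  intro h
  have := (vec_eq_iff.mp h).1
  norm_num at this

lemma vne0_e3 : vr0f ((1 : ℝ)/40) ≠ vl0f ((1 : ℝ)/40) := by
  rw [vr0_e3, vl0_e3]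
  intro h
  have := (vec_eq_iff.mp h).1
  norm_num at this

lemma vne1_e3 : vr1f ((1 : ℝ)/40) ≠ vl1f ((1 : ℝ)/40) := by
  rw [vr1_e3, vl1_e3]
  intro h
  have := (vec_eq_iff.mp h).1
  norm_num at this

lemma vne0_e4 : vr0f (2 : ℝ) ≠ vl0f (2 : ℝ) := by
  rw [vr0_e4, vl0_e4]
  intro h
  have := (vec_eq_iff.mp h).1
  norm_num at this

lemma vne2_e4 : vr2f (2 : ℝ) ≠ vl2f (2 : ℝ) := by
  rw [vr2_e4, vl2_e4]
  intro h
  have := (vec_eq_iff.mp h).1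
  norm_num at this

lemma veq2_e1 : vr2f (0 : ℝ) = vl2f (0 : ℝ) := by
  unfold vr2f vl2f velR velL
  rw [st_eq ((1 : ℝ)/200) (by norm_num : ((0 : ℝ) : ℝ) ≠ ((1 : ℝ)/200)), st_eq (2 : ℝ) (by norm_num : ((0 : ℝ) : ℝ) ≠ (2 : ℝ)), W23_smul, W23_smul]

lemma veq0_e2 : vr0f ((1 : ℝ)/200) = vl0f ((1 : ℝ)/200) := by
  unfold vr0f vl0f velR velL
  rw [st_eq (0 : ℝ) (by norm_num : (((1 : ℝ)/200) : ℝ) ≠ (0 : ℝ)), st_eq ((1 : ℝ)/40) (by norm_num : (((1 : ℝ)/200) : ℝ) ≠ ((1 : ℝ)/40)), st_eq (2 : ℝ) (by norm_num : (((1 : ℝ)/200) : ℝ) ≠ (2 : ℝ))]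

lemma veq2_e3 : vr2f ((1 : ℝ)/40) = vl2f ((1 : ℝ)/40) := by
  unfold vr2f vl2f velR velL
  rw [st_eq ((1 : ℝ)/200) (by norm_num : (((1 : ℝ)/40) : ℝ) ≠ ((1 : ℝ)/200)), st_eq (2 : ℝ) (by norm_num : (((1 : ℝ)/40) : ℝ) ≠ (2 : ℝ)), W23_smul, W23_smul]

lemma veq1_e4 : vr1f (2 : ℝ) = vl1f (2 : ℝ) := by
  unfold vr1f vl1f velR velL
  rw [st_eq (0 : ℝ) (by norm_num : ((2 : ℝ) : ℝ) ≠ (0 : ℝ)), st_eq ((1 : ℝ)/200) (by norm_num : ((2 : ℝ) : ℝ) ≠ ((1 : ℝ)/200)), st_eq ((1 : ℝ)/40) (by norm_num : ((2 : ℝ) : ℝ) ≠ ((1 : ℝ)/40))]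

lemma vch0 (t : ℝ) (h : vr0f t ≠ vl0f t) : t = (0 : ℝ) ∨ t = ((1 : ℝ)/40) ∨ t = (2 : ℝ) := by
  by_contra hc
  push_neg at hc
  apply h
  unfold vr0f vl0f velR velL
  rw [st_eq (0 : ℝ) hc.1, st_eq ((1 : ℝ)/40) hc.2.1, st_eq (2 : ℝ) hc.2.2]

lemma vch1 (t : ℝ) (h : vr1f t ≠ vl1f t) : t = (0 : ℝ) ∨ t = ((1 : ℝ)/200) ∨ t = ((1 : ℝ)/40) := by
  by_contra hc
  push_neg at hc
  apply h
  unfold vr1f vl1f velR velL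
  rw [st_eq (0 : ℝ) hc.1, st_eq ((1 : ℝ)/200) hc.2.1, st_eq ((1 : ℝ)/40) hc.2.2]

lemma vch2 (t : ℝ) (h : vr2f t ≠ vl2f t) : t = ((1 : ℝ)/200) ∨ t = (2 : ℝ) := by
  by_contra hc
  push_neg at hc
  apply h
  unfold vr2f vl2f velR velL
  rw [st_eq ((1 : ℝ)/200) hc.1, st_eq (2 : ℝ) hc.2, W23_smul, W23_smul]

lemma sq01 (t : ℝ) : 4 ≤ (((-8 : ℝ)/5) + ((6348298 : ℝ)/1440575) * t + ((-6962348 : ℝ)/1440575) * Rmp (t - (0 : ℝ)) + ((32265 : ℝ)/3974) * Rmp (t - ((1 : ℝ)/200)) + ((-13146 : ℝ)/57623) * Rmp (t - ((1 : ℝ)/40)) + ((-45838836 : ℝ)/355822025) * Rmp (t - (2 : ℝ)))^2 + (((6 : ℝ)/5) + ((2423903 : ℝ)/2881150) * t + ((5221761 : ℝ)/1440575) * Rmp (t - (0 : ℝ)) + ((53775 : ℝ)/15896) * Rmp (t - ((1 : ℝ)/200)) + ((12520 : ℝ)/57623) * Rmp (t - ((1 : ℝ)/40)) + ((61118448 :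 ℝ)/355822025) * Rmp (t - (2 : ℝ)))^2 := by
  rcases le_or_gt t (0 : ℝ) with h1|h1
  · rw [Rmp_le (show t ≤ ((0 : ℝ):ℝ) by linarith), Rmp_le (show t ≤ (((1 : ℝ)/200):ℝ) by linarith), Rmp_le (show t ≤ (((1 : ℝ)/40):ℝ) by linarith), Rmp_le (show t ≤ ((2 : ℝ):ℝ) by linarith)]
    nlinarith [sq_nonneg (t - (0 : ℝ))]
  rcases le_or_gt t ((1 : ℝ)/200) with h2|h2
  · rw [Rmp_ge (show ((0 : ℝ):ℝ) ≤ t by linarith), Rmp_le (show t ≤ (((1 : ℝ)/200):ℝ) by linarith), Rmp_le (show t ≤ (((1 : ℝ)/40):ℝ) by linarith), Rmp_le (show t ≤ ((2 : ℝ):ℝ) by linarith)]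
    nlinarith [sq_nonneg (t - (0 : ℝ))]
  rcases le_or_gt t ((1 : ℝ)/40) with h3|h3
  · rw [Rmp_ge (show ((0 : ℝ):ℝ) ≤ t by linarith), Rmp_ge (show (((1 : ℝ)/200):ℝ) ≤ t by linarith), Rmp_le (show t ≤ (((1 : ℝ)/40):ℝ) by linarith), Rmp_le (show t ≤ ((2 : ℝ):ℝ) by linarith)]
    nlinarith [sq_nonneg (t - ((1 : ℝ)/40))]
  rcases le_or_gt t (2 : ℝ) with h4|h4
  · rw [Rmp_ge (show ((0 : ℝ):ℝ) ≤ t by linarith), Rmp_ge (show (((1 : ℝ)/200):ℝ) ≤ t by linarith), Rmp_ge (show (((1 : ℝ)/40):ℝ) ≤ t by linarith), Rmp_le (show t ≤ ((2 : ℝ):ℝ) by linarith)]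
    nlinarith [sq_nonneg (t - ((1 : ℝ)/40))]
  · rw [Rmp_ge (show ((0 : ℝ):ℝ) ≤ t by linarith), Rmp_ge (show (((1 : ℝ)/200):ℝ) ≤ t by linarith), Rmp_ge (show (((1 : ℝ)/40):ℝ) ≤ t by linarith), Rmp_ge (show ((2 : ℝ):ℝ) ≤ t by linarith)]
    nlinarith [sq_nonneg (t - (2 : ℝ))]

lemma sq02 (t : ℝ) : 4 ≤ (((-2881782373 : ℝ)/824525520) + ((175978150501 : ℝ)/14944525050) * t + ((-3481174 : ℝ)/1440575) * Rmp (t - (0 : ℝ)) + ((-32265 : ℝ)/3974) * Rmp (t - ((1 : ℝ)/200)) + ((-6573 : ℝ)/57623) * Rmp (t - ((1 : ℝ)/40)) + ((-91677672 : ℝ)/355822025) * Rmp (t - (2 : ℝ)))^2 + (((476958621 : ℝ)/1099367360) + ((40606827099 : ℝ)/19926033400) * t + ((5221761 : ℝ)/2881150) * Rmp (t - (0 : ℝ)) + ((-53775 : ℝ)/15896) * Rmp (t - ((1 : ℝ)/200)) + ((6260 : ℝ)/57623) * Rmp (t - ((1 : ℝ)/40)) + ((122236896 : ℝ)/355822025)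 * Rmp (t - (2 : ℝ)))^2 := by
  rcases le_or_gt t (0 : ℝ) with h1|h1
  · rw [Rmp_le (show t ≤ ((0 : ℝ):ℝ) by linarith), Rmp_le (show t ≤ (((1 : ℝ)/200):ℝ) by linarith), Rmp_le (show t ≤ (((1 : ℝ)/40):ℝ) by linarith), Rmp_le (show t ≤ ((2 : ℝ):ℝ) by linarith)]
    nlinarith [sq_nonneg (t - (0 : ℝ))]
  rcases le_or_gt t ((1 : ℝ)/200) with h2|h2
  · rw [Rmp_ge (show ((0 : ℝ):ℝ) ≤ t by linarith), Rmp_le (show t ≤ (((1 : ℝ)/200):ℝ) by linarith), Rmp_le (show t ≤ (((1 : ℝ)/40):ℝ) by linarith), Rmp_le (show t ≤ ((2 : ℝ):ℝ) by linarith)]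
    nlinarith [sq_nonneg (t - ((1 : ℝ)/200))]
  rcases le_or_gt t ((1 : ℝ)/40) with h3|h3
  · rw [Rmp_ge (show ((0 : ℝ):ℝ) ≤ t by linarith), Rmp_ge (show (((1 : ℝ)/200):ℝ) ≤ t by linarith), Rmp_le (show t ≤ (((1 : ℝ)/40):ℝ) by linarith), Rmp_le (show t ≤ ((2 : ℝ):ℝ) by linarith)]
    nlinarith [sq_nonneg (t - ((1 : ℝ)/40))]
  rcases le_or_gt t (2 : ℝ) with h4|h4
  · rw [Rmp_ge (show ((0 : ℝ):ℝ) ≤ t by linarith), Rmp_ge (show (((1 : ℝ)/200):ℝ) ≤ t by linarith), Rmp_ge (show (((1 : ℝ)/40):ℝ) ≤ t by linarith), Rmp_le (show t ≤ ((2 : ℝ):ℝ) by linarith)]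
    nlinarith [sq_nonneg (t - (2 : ℝ))]
  · rw [Rmp_ge (show ((0 : ℝ):ℝ) ≤ t by linarith), Rmp_ge (show (((1 : ℝ)/200):ℝ) ≤ t by linarith), Rmp_ge (show (((1 : ℝ)/40):ℝ) ≤ t by linarith), Rmp_ge (show ((2 : ℝ):ℝ) ≤ t by linarith)]
    nlinarith [sq_nonneg (t - (2 : ℝ))]

lemma sq12 (t : ℝ) : 4 ≤ (((-1562541541 : ℝ)/824525520) + ((110120907049 : ℝ)/14944525050) * t + ((3481174 : ℝ)/1440575) * Rmp (t - (0 : ℝ)) + ((-32265 : ℝ)/1987) * Rmp (t - ((1 : ℝ)/200)) + ((6573 : ℝ)/57623) * Rmp (t - ((1 : ℝ)/40)) + ((-45838836 : ℝ)/355822025) * Rmp (t - (2 : ℝ)))^2 + (((-842282211 : ℝ)/1099367360) + ((23843113951 : ℝ)/19926033400) * t + ((-5221761 : ℝ)/2881150) * Rmp (t - (0 : ℝ)) + ((-53775 : ℝ)/7948) * Rmp (t - ((1 : ℝ)/200)) + ((-6260 : ℝ)/57623) * Rmp (t - ((1 : ℝ)/40)) + ((61118448 : ℝ)/355822025) * Rmp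 (t - (2 : ℝ)))^2 := by
  rcases le_or_gt t (0 : ℝ) with h1|h1
  · rw [Rmp_le (show t ≤ ((0 : ℝ):ℝ) by linarith), Rmp_le (show t ≤ (((1 : ℝ)/200):ℝ) by linarith), Rmp_le (show t ≤ (((1 : ℝ)/40):ℝ) by linarith), Rmp_le (show t ≤ ((2 : ℝ):ℝ) by linarith)]
    nlinarith [sq_nonneg (t - (0 : ℝ))]
  rcases le_or_gt t ((1 : ℝ)/200) with h2|h2
  · rw [Rmp_ge (show ((0 : ℝ):ℝ) ≤ t by linarith), Rmp_le (show t ≤ (((1 : ℝ)/200):ℝ) by linarith), Rmp_le (show t ≤ (((1 : ℝ)/40):ℝ) by linarith), Rmp_le (show t ≤ ((2 : ℝ):ℝ) by linarith)]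
    nlinarith [sq_nonneg (t - ((1 : ℝ)/200))]
  rcases le_or_gt t ((1 : ℝ)/40) with h3|h3
  · rw [Rmp_ge (show ((0 : ℝ):ℝ) ≤ t by linarith), Rmp_ge (show (((1 : ℝ)/200):ℝ) ≤ t by linarith), Rmp_le (show t ≤ (((1 : ℝ)/40):ℝ) by linarith), Rmp_le (show t ≤ ((2 : ℝ):ℝ) by linarith)]
    nlinarith [sq_nonneg (t - ((1 : ℝ)/200))]
  rcases le_or_gt t (2 : ℝ) with h4|h4
  · rw [Rmp_ge (show ((0 : ℝ):ℝ) ≤ t by linarith), Rmp_ge (show (((1 : ℝ)/200):ℝ) ≤ t by linarith), Rmp_ge (show (((1 : ℝ)/40):ℝ) ≤ t by linarith), Rmp_le (show t ≤ ((2 : ℝ):ℝ) by linarith)]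
    nlinarith [sq_nonneg (t - ((1 : ℝ)/40))]
  · rw [Rmp_ge (show ((0 : ℝ):ℝ) ≤ t by linarith), Rmp_ge (show (((1 : ℝ)/200):ℝ) ≤ t by linarith), Rmp_ge (show (((1 : ℝ)/40):ℝ) ≤ t by linarith), Rmp_ge (show ((2 : ℝ):ℝ) ≤ t by linarith)]
    nlinarith [sq_nonneg (t - (2 : ℝ))]

noncomputable def xf : Fin 3 → ℝ → E2 := ![x0f, x1f, x2f]
noncomputable def vrf : Fin 3 → ℝ → E2 := ![vr0f, vr1f, vr2f]
noncomputable def vlf : Fin 3 → ℝ → E2 := ![vl0f, vl1f, vl2f]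

noncomputable def Sys : BallSystem (Fin 3) 2 Set.univ where
  x := xf
  vr := vrf
  vl := vlf
  right_lin := by
    intro i t _
    fin_cases i
    · exact traj_right P0 V0 W01 W02 W03 (0 : ℝ) ((1 : ℝ)/40) (2 : ℝ) t
    · exact traj_right P1 V1 W11 W12 W13 (0 : ℝ) ((1 : ℝ)/200) ((1 : ℝ)/40) t
    · exact traj_right P2 V2 W21 W22 W23 ((1 : ℝ)/200) (2 : ℝ) (3 : ℝ) t
  left_lin := by
    intro i t _
    fin_cases i
    · exact traj_left P0 V0 W01 W02 W03 (0 : ℝ) ((1 : ℝ)/40) (2 : ℝ) t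
    · exact traj_left P1 V1 W11 W12 W13 (0 : ℝ) ((1 : ℝ)/200) ((1 : ℝ)/40) t
    · exact traj_left P2 V2 W21 W22 W23 ((1 : ℝ)/200) (2 : ℝ) (3 : ℝ) t
  dist_ge := by
    intro i j hij t _
    fin_cases i <;> fin_cases j
    · exact absurd rfl hij
    · show 2 ≤ ‖x0f t - x1f t‖
      rw [diff01]
      exact two_le_norm_vec (sq01 t)
    · show 2 ≤ ‖x0f t - x2f t‖
      rw [diff02]
      exact two_le_norm_vec (sq02 t)
    · show 2 ≤ ‖x1f t - x0f t‖
      rw [norm_sub_rev, diff01]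
      exact two_le_norm_vec (sq01 t)
    · exact absurd rfl hij
    · show 2 ≤ ‖x1f t - x2f t‖
      rw [diff12]
      exact two_le_norm_vec (sq12 t)
    · show 2 ≤ ‖x2f t - x0f t‖
      rw [norm_sub_rev, diff02]
      exact two_le_norm_vec (sq02 t)
    · show 2 ≤ ‖x2f t - x1f t‖
      rw [norm_sub_rev, diff12]
      exact two_le_norm_vec (sq12 t)
    · exact absurd rfl hij
  collision_rule := by
    intro i t _ _ hne
    fin_cases i
    · rcases vch0 t hne with rfl|rfl|rfl
      · refine ⟨1, by decide, ?_, ?_, ?_, ?_, ?_, ?_⟩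
        · show ‖x0f (0 : ℝ) - x1f (0 : ℝ)‖ = 2
          rw [dval01_e1]
          exact norm_vec_eq_two (by norm_num)
        · exact vne1_e1
        · intro k hk1 hk2
          fin_cases k
          · exact absurd rfl hk1
          · rfl
          · exfalso
            have hk2' : ‖x0f (0 : ℝ) - x2f (0 : ℝ)‖ = 2 := hk2
            rw [dval02_e1] at hk2'
            have := norm_vec_eq_two_iff.mp hk2'
            norm_num at this
        · intro k hk1 hk2
          fin_cases k
          · exact absurd rfl hk1
          · exact absurd rfl hk2
          · exact veq2_e1
        · show vr0f (0 : ℝ) = vl0f (0 : ℝ) - ⟪vl0f (0 : ℝ) - vl1f (0 : ℝ), (2⁻¹:ℝ) • (x0f (0 : ℝ) - x1f (0 : ℝ))⟫ • ((2⁻¹:ℝ) • (x0f (0 : ℝ) - x1f (0 : ℝ)))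
          rw [dval01_e1, vr0_e1, vl0_e1, vl1_e1]
          simp only [vec_smul, vec_sub, vec_inner, vec_add]
          rw [vec_eq_iff]
          constructor <;> norm_num
        · show vr1f (0 : ℝ) = vl1f (0 : ℝ) + ⟪vl0f (0 : ℝ) - vl1f (0 : ℝ), (2⁻¹:ℝ) • (x0f (0 : ℝ) - x1f (0 : ℝ))⟫ • ((2⁻¹:ℝ) • (x0f (0 : ℝ) - x1f (0 : ℝ)))
          rw [dval01_e1, vr1_e1, vl0_e1, vl1_e1]
          simp only [vec_smul, vec_sub, vec_inner, vec_add]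
          rw [vec_eq_iff]
          constructor <;> norm_num
      · refine ⟨1, by decide, ?_, ?_, ?_, ?_, ?_, ?_⟩
        · show ‖x0f ((1 : ℝ)/40) - x1f ((1 : ℝ)/40)‖ = 2
          rw [dval01_e3]
          exact norm_vec_eq_two (by norm_num)
        · exact vne1_e3
        · intro k hk1 hk2
          fin_cases k
          · exact absurd rfl hk1
          · rfl
          · exfalso
            have hk2' : ‖x0f ((1 : ℝ)/40) - x2f ((1 : ℝ)/40)‖ = 2 := hk2
            rw [dval02_e3] at hk2'
            have := norm_vec_eq_two_iff.mp hk2'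
            norm_num at this
        · intro k hk1 hk2
          fin_cases k
          · exact absurd rfl hk1
          · exact absurd rfl hk2
          · exact veq2_e3
        · show vr0f ((1 : ℝ)/40) = vl0f ((1 : ℝ)/40) - ⟪vl0f ((1 : ℝ)/40) - vl1f ((1 : ℝ)/40), (2⁻¹:ℝ) • (x0f ((1 : ℝ)/40) - x1f ((1 : ℝ)/40))⟫ • ((2⁻¹:ℝ) • (x0f ((1 : ℝ)/40) - x1f ((1 : ℝ)/40)))
          rw [dval01_e3, vr0_e3, vl0_e3, vl1_e3]
          simp only [vec_smul, vec_sub, vec_inner, vec_add]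
          rw [vec_eq_iff]
          constructor <;> norm_num
        · show vr1f ((1 : ℝ)/40) = vl1f ((1 : ℝ)/40) + ⟪vl0f ((1 : ℝ)/40) - vl1f ((1 : ℝ)/40), (2⁻¹:ℝ) • (x0f ((1 : ℝ)/40) - x1f ((1 : ℝ)/40))⟫ • ((2⁻¹:ℝ) • (x0f ((1 : ℝ)/40) - x1f ((1 : ℝ)/40)))
          rw [dval01_e3, vr1_e3, vl0_e3, vl1_e3]
          simp only [vec_smul, vec_sub, vec_inner, vec_add]
          rw [vec_eq_iff]
          constructor <;> norm_num
      · refine ⟨2, by decide, ?_, ?_, ?_, ?_, ?_, ?_⟩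
        · show ‖x0f (2 : ℝ) - x2f (2 : ℝ)‖ = 2
          rw [dval02_e4]
          exact norm_vec_eq_two (by norm_num)
        · exact vne2_e4
        · intro k hk1 hk2
          fin_cases k
          · exact absurd rfl hk1
          · exfalso
            have hk2' : ‖x0f (2 : ℝ) - x1f (2 : ℝ)‖ = 2 := hk2
            rw [dval01_e4] at hk2'
            have := norm_vec_eq_two_iff.mp hk2'
            norm_num at this
          · rfl
        · intro k hk1 hk2
          fin_cases k
          · exact absurd rfl hk1
          · exact veq1_e4
          · exact absurd rfl hk2
        · show vr0f (2 : ℝ) = vl0f (2 : ℝ) - ⟪vl0f (2 : ℝ) - vl2f (2 : ℝ), (2⁻¹:ℝ) • (x0f (2 : ℝ) - x2f (2 : ℝ))⟫ • ((2⁻¹:ℝ) • (x0f (2 : ℝ) - x2f (2 : ℝ)))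
          rw [dval02_e4, vr0_e4, vl0_e4, vl2_e4]
          simp only [vec_smul, vec_sub, vec_inner, vec_add]
          rw [vec_eq_iff]
          constructor <;> norm_num
        · show vr2f (2 : ℝ) = vl2f (2 : ℝ) + ⟪vl0f (2 : ℝ) - vl2f (2 : ℝ), (2⁻¹:ℝ) • (x0f (2 : ℝ) - x2f (2 : ℝ))⟫ • ((2⁻¹:ℝ) • (x0f (2 : ℝ) - x2f (2 : ℝ)))
          rw [dval02_e4, vr2_e4, vl0_e4, vl2_e4]
          simp only [vec_smul, vec_sub, vec_inner, vec_add]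
          rw [vec_eq_iff]
          constructor <;> norm_num
    · rcases vch1 t hne with rfl|rfl|rfl
      · refine ⟨0, by decide, ?_, ?_, ?_, ?_, ?_, ?_⟩
        · show ‖x1f (0 : ℝ) - x0f (0 : ℝ)‖ = 2
          rw [dval10_e1]
          exact norm_vec_eq_two (by norm_num)
        · exact vne0_e1
        · intro k hk1 hk2
          fin_cases k
          · rfl
          · exact absurd rfl hk1
          · exfalso
            have hk2' : ‖x1f (0 : ℝ) - x2f (0 : ℝ)‖ = 2 := hk2
            rw [dval12_e1] at hk2'
            have := norm_vec_eq_two_iff.mp hk2'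
            norm_num at this
        · intro k hk1 hk2
          fin_cases k
          · exact absurd rfl hk2
          · exact absurd rfl hk1
          · exact veq2_e1
        · show vr1f (0 : ℝ) = vl1f (0 : ℝ) - ⟪vl1f (0 : ℝ) - vl0f (0 : ℝ), (2⁻¹:ℝ) • (x1f (0 : ℝ) - x0f (0 : ℝ))⟫ • ((2⁻¹:ℝ) • (x1f (0 : ℝ) - x0f (0 : ℝ)))
          rw [dval10_e1, vr1_e1, vl1_e1, vl0_e1]
          simp only [vec_smul, vec_sub, vec_inner, vec_add]
          rw [vec_eq_iff]
          constructor <;> norm_num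
        · show vr0f (0 : ℝ) = vl0f (0 : ℝ) + ⟪vl1f (0 : ℝ) - vl0f (0 : ℝ), (2⁻¹:ℝ) • (x1f (0 : ℝ) - x0f (0 : ℝ))⟫ • ((2⁻¹:ℝ) • (x1f (0 : ℝ) - x0f (0 : ℝ)))
          rw [dval10_e1, vr0_e1, vl1_e1, vl0_e1]
          simp only [vec_smul, vec_sub, vec_inner, vec_add]
          rw [vec_eq_iff]
          constructor <;> norm_num
      · refine ⟨2, by decide, ?_, ?_, ?_, ?_, ?_, ?_⟩
        · show ‖x1f ((1 : ℝ)/200) - x2f ((1 : ℝ)/200)‖ = 2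
          rw [dval12_e2]
          exact norm_vec_eq_two (by norm_num)
        · exact vne2_e2
        · intro k hk1 hk2
          fin_cases k
          · exfalso
            have hk2' : ‖x1f ((1 : ℝ)/200) - x0f ((1 : ℝ)/200)‖ = 2 := hk2
            rw [dval10_e2] at hk2'
            have := norm_vec_eq_two_iff.mp hk2'
            norm_num at this
          · exact absurd rfl hk1
          · rfl
        · intro k hk1 hk2
          fin_cases k
          · exact veq0_e2
          · exact absurd rfl hk1
          · exact absurd rfl hk2
        · show vr1f ((1 : ℝ)/200) = vl1f ((1 : ℝ)/200) - ⟪vl1f ((1 : ℝ)/200) - vl2f ((1 : ℝ)/200), (2⁻¹:ℝ) • (x1f ((1 : ℝ)/200) - x2f ((1 : ℝ)/200))⟫ • ((2⁻¹:ℝ) • (x1f ((1 : ℝ)/200) - x2f ((1 : ℝ)/200)))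
          rw [dval12_e2, vr1_e2, vl1_e2, vl2_e2]
          simp only [vec_smul, vec_sub, vec_inner, vec_add]
          rw [vec_eq_iff]
          constructor <;> norm_num
        · show vr2f ((1 : ℝ)/200) = vl2f ((1 : ℝ)/200) + ⟪vl1f ((1 : ℝ)/200) - vl2f ((1 : ℝ)/200), (2⁻¹:ℝ) • (x1f ((1 : ℝ)/200) - x2f ((1 : ℝ)/200))⟫ • ((2⁻¹:ℝ) • (x1f ((1 : ℝ)/200) - x2f ((1 : ℝ)/200)))
          rw [dval12_e2, vr2_e2, vl1_e2, vl2_e2]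
          simp only [vec_smul, vec_sub, vec_inner, vec_add]
          rw [vec_eq_iff]
          constructor <;> norm_num
      · refine ⟨0, by decide, ?_, ?_, ?_, ?_, ?_, ?_⟩
        · show ‖x1f ((1 : ℝ)/40) - x0f ((1 : ℝ)/40)‖ = 2
          rw [dval10_e3]
          exact norm_vec_eq_two (by norm_num)
        · exact vne0_e3
        · intro k hk1 hk2
          fin_cases k
          · rfl
          · exact absurd rfl hk1
          · exfalso
            have hk2' : ‖x1f ((1 : ℝ)/40) - x2f ((1 : ℝ)/40)‖ = 2 := hk2
            rw [dval12_e3] at hk2'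
            have := norm_vec_eq_two_iff.mp hk2'
            norm_num at this
        · intro k hk1 hk2
          fin_cases k
          · exact absurd rfl hk2
          · exact absurd rfl hk1
          · exact veq2_e3
        · show vr1f ((1 : ℝ)/40) = vl1f ((1 : ℝ)/40) - ⟪vl1f ((1 : ℝ)/40) - vl0f ((1 : ℝ)/40), (2⁻¹:ℝ) • (x1f ((1 : ℝ)/40) - x0f ((1 : ℝ)/40))⟫ • ((2⁻¹:ℝ) • (x1f ((1 : ℝ)/40) - x0f ((1 : ℝ)/40)))
          rw [dval10_e3, vr1_e3, vl1_e3, vl0_e3]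
          simp only [vec_smul, vec_sub, vec_inner, vec_add]
          rw [vec_eq_iff]
          constructor <;> norm_num
        · show vr0f ((1 : ℝ)/40) = vl0f ((1 : ℝ)/40) + ⟪vl1f ((1 : ℝ)/40) - vl0f ((1 : ℝ)/40), (2⁻¹:ℝ) • (x1f ((1 : ℝ)/40) - x0f ((1 : ℝ)/40))⟫ • ((2⁻¹:ℝ) • (x1f ((1 : ℝ)/40) - x0f ((1 : ℝ)/40)))
          rw [dval10_e3, vr0_e3, vl1_e3, vl0_e3]
          simp only [vec_smul, vec_sub, vec_inner, vec_add]
          rw [vec_eq_iff]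
          constructor <;> norm_num
    · rcases vch2 t hne with rfl|rfl
      · refine ⟨1, by decide, ?_, ?_, ?_, ?_, ?_, ?_⟩
        · show ‖x2f ((1 : ℝ)/200) - x1f ((1 : ℝ)/200)‖ = 2
          rw [dval21_e2]
          exact norm_vec_eq_two (by norm_num)
        · exact vne1_e2
        · intro k hk1 hk2
          fin_cases k
          · exfalso
            have hk2' : ‖x2f ((1 : ℝ)/200) - x0f ((1 : ℝ)/200)‖ = 2 := hk2
            rw [dval20_e2] at hk2'
            have := norm_vec_eq_two_iff.mp hk2'
            norm_num at this
          · rfl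
          · exact absurd rfl hk1
        · intro k hk1 hk2
          fin_cases k
          · exact veq0_e2
          · exact absurd rfl hk2
          · exact absurd rfl hk1
        · show vr2f ((1 : ℝ)/200) = vl2f ((1 : ℝ)/200) - ⟪vl2f ((1 : ℝ)/200) - vl1f ((1 : ℝ)/200), (2⁻¹:ℝ) • (x2f ((1 : ℝ)/200) - x1f ((1 : ℝ)/200))⟫ • ((2⁻¹:ℝ) • (x2f ((1 : ℝ)/200) - x1f ((1 : ℝ)/200)))
          rw [dval21_e2, vr2_e2, vl2_e2, vl1_e2]
          simp only [vec_smul, vec_sub, vec_inner, vec_add]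
          rw [vec_eq_iff]
          constructor <;> norm_num
        · show vr1f ((1 : ℝ)/200) = vl1f ((1 : ℝ)/200) + ⟪vl2f ((1 : ℝ)/200) - vl1f ((1 : ℝ)/200), (2⁻¹:ℝ) • (x2f ((1 : ℝ)/200) - x1f ((1 : ℝ)/200))⟫ • ((2⁻¹:ℝ) • (x2f ((1 : ℝ)/200) - x1f ((1 : ℝ)/200)))
          rw [dval21_e2, vr1_e2, vl2_e2, vl1_e2]
          simp only [vec_smul, vec_sub, vec_inner, vec_add]
          rw [vec_eq_iff]
          constructor <;> norm_num
      · refine ⟨0, by decide, ?_, ?_, ?_, ?_, ?_, ?_⟩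
        · show ‖x2f (2 : ℝ) - x0f (2 : ℝ)‖ = 2
          rw [dval20_e4]
          exact norm_vec_eq_two (by norm_num)
        · exact vne0_e4
        · intro k hk1 hk2
          fin_cases k
          · rfl
          · exfalso
            have hk2' : ‖x2f (2 : ℝ) - x1f (2 : ℝ)‖ = 2 := hk2
            rw [dval21_e4] at hk2'
            have := norm_vec_eq_two_iff.mp hk2'
            norm_num at this
          · exact absurd rfl hk1
        · intro k hk1 hk2
          fin_cases k
          · exact absurd rfl hk2
          · exact veq1_e4
          · exact absurd rfl hk1
        · show vr2f (2 : ℝ) = vl2f (2 : ℝ) - ⟪vl2f (2 : ℝ) - vl0f (2 : ℝ), (2⁻¹:ℝ) • (x2f (2 : ℝ) - x0f (2 : ℝ))⟫ • ((2⁻¹:ℝ) • (x2f (2 : ℝ) - x0f (2 : ℝ)))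
          rw [dval20_e4, vr2_e4, vl2_e4, vl0_e4]
          simp only [vec_smul, vec_sub, vec_inner, vec_add]
          rw [vec_eq_iff]
          constructor <;> norm_num
        · show vr0f (2 : ℝ) = vl0f (2 : ℝ) + ⟪vl2f (2 : ℝ) - vl0f (2 : ℝ), (2⁻¹:ℝ) • (x2f (2 : ℝ) - x0f (2 : ℝ))⟫ • ((2⁻¹:ℝ) • (x2f (2 : ℝ) - x0f (2 : ℝ)))
          rw [dval20_e4, vr0_e4, vl2_e4, vl0_e4]
          simp only [vec_smul, vec_sub, vec_inner, vec_add]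
          rw [vec_eq_iff]
          constructor <;> norm_num

noncomputable def Ecol : Set (ℝ × Finset (Fin 3)) :=
  {((0 : ℝ), ({0, 1} : Finset (Fin 3))), ((1/200 : ℝ), ({1, 2} : Finset (Fin 3))), ((1/40 : ℝ), ({0, 1} : Finset (Fin 3))), ((2 : ℝ), ({0, 2} : Finset (Fin 3)))}

lemma collisions_eq : Sys.collisions = Ecol := by
  ext p
  constructor
  · rintro ⟨-, -, i, j, hij, hp2, htan, hvi, hvj⟩
    simp only [Ecol, Set.mem_insert_iff, Set.mem_singleton_iff]
    fin_cases i <;> fin_cases j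
    · exact absurd rfl hij
    · have ha := vch0 p.1 hvi
      have hb := vch1 p.1 hvj
      rcases ha with ha|ha|ha <;> rcases hb with hb|hb|hb
      · exact Or.inl (Prod.ext_iff.mpr ⟨ha, hp2⟩)
      · rw [ha] at hb; norm_num at hb
      · rw [ha] at hb; norm_num at hb
      · rw [ha] at hb; norm_num at hb
      · rw [ha] at hb; norm_num at hb
      · exact Or.inr (Or.inr (Or.inl (Prod.ext_iff.mpr ⟨ha, hp2⟩)))
      · rw [ha] at hb; norm_num at hb
      · rw [ha] at hb; norm_num at hb
      · rw [ha] at hb; norm_num at hb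
    · have ha := vch0 p.1 hvi
      have hb := vch2 p.1 hvj
      rcases ha with ha|ha|ha <;> rcases hb with hb|hb
      · rw [ha] at hb; norm_num at hb
      · rw [ha] at hb; norm_num at hb
      · rw [ha] at hb; norm_num at hb
      · rw [ha] at hb; norm_num at hb
      · rw [ha] at hb; norm_num at hb
      · exact Or.inr (Or.inr (Or.inr (Prod.ext_iff.mpr ⟨ha, hp2⟩)))
    · have ha := vch1 p.1 hvi
      have hb := vch0 p.1 hvj
      rcases ha with ha|ha|ha <;> rcases hb with hb|hb|hb
      · exact Or.inl (Prod.ext_iff.mpr ⟨ha, hp2.trans (Finset.pair_comm _ _)⟩)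
      · rw [ha] at hb; norm_num at hb
      · rw [ha] at hb; norm_num at hb
      · rw [ha] at hb; norm_num at hb
      · rw [ha] at hb; norm_num at hb
      · rw [ha] at hb; norm_num at hb
      · rw [ha] at hb; norm_num at hb
      · exact Or.inr (Or.inr (Or.inl (Prod.ext_iff.mpr ⟨ha, hp2.trans (Finset.pair_comm _ _)⟩)))
      · rw [ha] at hb; norm_num at hb
    · exact absurd rfl hij
    · have ha := vch1 p.1 hvi
      have hb := vch2 p.1 hvj
      rcases ha with ha|ha|ha <;> rcases hb with hb|hb
      · rw [ha] at hb; norm_num at hb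
      · rw [ha] at hb; norm_num at hb
      · exact Or.inr (Or.inl (Prod.ext_iff.mpr ⟨ha, hp2⟩))
      · rw [ha] at hb; norm_num at hb
      · rw [ha] at hb; norm_num at hb
      · rw [ha] at hb; norm_num at hb
    · have ha := vch2 p.1 hvi
      have hb := vch0 p.1 hvj
      rcases ha with ha|ha <;> rcases hb with hb|hb|hb
      · rw [ha] at hb; norm_num at hb
      · rw [ha] at hb; norm_num at hb
      · rw [ha] at hb; norm_num at hb
      · rw [ha] at hb; norm_num at hb
      · rw [ha] at hb; norm_num at hb
      · exact Or.inr (Or.inr (Or.inr (Prod.ext_iff.mpr ⟨ha, hp2.trans (Finset.pair_comm _ _)⟩)))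
    · have ha := vch2 p.1 hvi
      have hb := vch1 p.1 hvj
      rcases ha with ha|ha <;> rcases hb with hb|hb|hb
      · rw [ha] at hb; norm_num at hb
      · exact Or.inr (Or.inl (Prod.ext_iff.mpr ⟨ha, hp2.trans (Finset.pair_comm _ _)⟩))
      · rw [ha] at hb; norm_num at hb
      · rw [ha] at hb; norm_num at hb
      · rw [ha] at hb; norm_num at hb
      · rw [ha] at hb; norm_num at hb
    · exact absurd rfl hij
  · intro hp
    simp only [Ecol, Set.mem_insert_iff, Set.mem_singleton_iff] at hp
    rcases hp with rfl|rfl|rfl|rfl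
    · refine ⟨Set.mem_univ _, ⟨-1, Set.mem_univ _, by norm_num⟩, 0, 1, by decide, rfl, ?_, ?_, ?_⟩
      · show ‖x0f (0 : ℝ) - x1f (0 : ℝ)‖ = 2
        rw [dval01_e1]
        exact norm_vec_eq_two (by norm_num)
      · exact vne0_e1
      · exact vne1_e1
    · refine ⟨Set.mem_univ _, ⟨-1, Set.mem_univ _, by norm_num⟩, 1, 2, by decide, rfl, ?_, ?_, ?_⟩
      · show ‖x1f ((1 : ℝ)/200) - x2f ((1 : ℝ)/200)‖ = 2
        rw [dval12_e2]
        exact norm_vec_eq_two (by norm_num)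
      · exact vne1_e2
      · exact vne2_e2
    · refine ⟨Set.mem_univ _, ⟨-1, Set.mem_univ _, by norm_num⟩, 0, 1, by decide, rfl, ?_, ?_, ?_⟩
      · show ‖x0f ((1 : ℝ)/40) - x1f ((1 : ℝ)/40)‖ = 2
        rw [dval01_e3]
        exact norm_vec_eq_two (by norm_num)
      · exact vne0_e3
      · exact vne1_e3
    · refine ⟨Set.mem_univ _, ⟨-1, Set.mem_univ _, by norm_num⟩, 0, 2, by decide, rfl, ?_, ?_, ?_⟩
      · show ‖x0f (2 : ℝ) - x2f (2 : ℝ)‖ = 2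
        rw [dval02_e4]
        exact norm_vec_eq_two (by norm_num)
      · exact vne0_e4
      · exact vne2_e4

lemma ecol_finite : Ecol.Finite :=
  (((Set.finite_singleton _).insert _).insert _).insert _

lemma ecol_ncard : Ecol.ncard = 4 := by
  have h1 : ((0 : ℝ), ({0, 1} : Finset (Fin 3))) ∉ ({((1/200 : ℝ), ({1, 2} : Finset (Fin 3))), ((1/40 : ℝ), ({0, 1} : Finset (Fin 3))), ((2 : ℝ), ({0, 2} : Finset (Fin 3)))} : Set (ℝ × Finset (Fin 3))) := by
    intro h
    simp only [Set.mem_insert_iff, Set.mem_singleton_iff, Prod.mk.injEq] at h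
    rcases h with ⟨h,-⟩|⟨h,-⟩|⟨h,-⟩ <;> norm_num at h
  have h2 : ((1/200 : ℝ), ({1, 2} : Finset (Fin 3))) ∉ ({((1/40 : ℝ), ({0, 1} : Finset (Fin 3))), ((2 : ℝ), ({0, 2} : Finset (Fin 3)))} : Set (ℝ × Finset (Fin 3))) := by
    intro h
    simp only [Set.mem_insert_iff, Set.mem_singleton_iff, Prod.mk.injEq] at h
    rcases h with ⟨h,-⟩|⟨h,-⟩ <;> norm_num at h
  have h3 : ((1/40 : ℝ), ({0, 1} : Finset (Fin 3))) ∉ ({((2 : ℝ), ({0, 2} : Finset (Fin 3)))} : Set (ℝ × Finset (Fin 3))) := by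
    intro h
    simp only [Set.mem_singleton_iff, Prod.mk.injEq] at h
    rcases h with ⟨h,-⟩; norm_num at h
  rw [Ecol, Set.ncard_insert_of_notMem h1 (((Set.finite_singleton _).insert _).insert _),
      Set.ncard_insert_of_notMem h2 ((Set.finite_singleton _).insert _),
      Set.ncard_insert_of_notMem h3 (Set.finite_singleton _), Set.ncard_singleton]

noncomputable def pq : ℝ → ℝ := fun t => (((7840844663 : ℝ)/5693152400) + ((-5220483403 : ℝ)/711644050) * t) * (((595341689 : ℝ)/2490754175) + ((-4580548369 : ℝ)/4981508350) * t) - (((-18995082251 : ℝ)/22772609600) + ((-23450209609 : ℝ)/2846576200) * t) * (((21941044306 : ℝ)/7472262525) + ((-6487164638 : ℝ)/7472262525) * t)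

lemma pq_cont : Continuous pq := by
  unfold pq; fun_prop

lemma late10 (t : ℝ) (ht : (252/5 : ℝ) ≤ t) : x1f t - x0f t = vec (((7840844663 : ℝ)/5693152400) + ((-5220483403 : ℝ)/711644050) * t) (((-18995082251 : ℝ)/22772609600) + ((-23450209609 : ℝ)/2846576200) * t) := by
  rw [diff10, Rmp_ge (show ((0 : ℝ):ℝ) ≤ t by linarith), Rmp_ge (show (((1 : ℝ)/200):ℝ) ≤ t by linarith), Rmp_ge (show (((1 : ℝ)/40):ℝ) ≤ t by linarith), Rmp_ge (show ((2 : ℝ):ℝ) ≤ t by linarith), vec_eq_iff]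
  constructor <;> ring

lemma late20 (t : ℝ) (ht : (252/5 : ℝ) ≤ t) : x2f t - x0f t = vec (((21941044306 : ℝ)/7472262525) + ((-6487164638 : ℝ)/7472262525) * t) (((595341689 : ℝ)/2490754175) + ((-4580548369 : ℝ)/4981508350) * t) := by
  rw [diff20, Rmp_ge (show ((0 : ℝ):ℝ) ≤ t by linarith), Rmp_ge (show (((1 : ℝ)/200):ℝ) ≤ t by linarith), Rmp_ge (show (((1 : ℝ)/40):ℝ) ≤ t by linarith), Rmp_ge (show ((2 : ℝ):ℝ) ≤ t by linarith), vec_eq_iff]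
  constructor <;> ring

lemma final_collinear : ∃ t : ℝ, (252/5 : ℝ) ≤ t ∧ Collinear ℝ ({x0f t, x1f t, x2f t} : Set E2) := by
  have hab : (252/5 : ℝ) ≤ 1009/20 := by norm_num
  have hmem : (0 : ℝ) ∈ Set.Icc (pq (1009/20)) (pq (252/5)) := by
    constructor <;> · unfold pq; norm_num
  obtain ⟨t, ht, hpt⟩ := intermediate_value_Icc' hab pq_cont.continuousOn hmem
  refine ⟨t, ht.1, ?_⟩
  have h1 := late10 t ht.1
  have h2 := late20 t ht.1
  have hden : (((7840844663 : ℝ)/5693152400) + ((-5220483403 : ℝ)/711644050) * t) < 0 := by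
    have := ht.1; have := ht.2; nlinarith
  set c : ℝ := (((21941044306 : ℝ)/7472262525) + ((-6487164638 : ℝ)/7472262525) * t) / (((7840844663 : ℝ)/5693152400) + ((-5220483403 : ℝ)/711644050) * t) with hc
  have key : x2f t = AffineMap.lineMap (x0f t) (x1f t) c := by
    rw [AffineMap.lineMap_apply_module]
    have hsub : x2f t - x0f t = c • (x1f t - x0f t) := by
      rw [h1, h2, vec_smul, vec_eq_iff]
      constructor
      · rw [hc, div_mul_cancel₀ _ (ne_of_lt hden)]
      · rw [hc, eq_comm, div_mul_eq_mul_div, div_eq_iff (ne_of_lt hden)]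
        have hpt' : (((7840844663 : ℝ)/5693152400) + ((-5220483403 : ℝ)/711644050) * t) * (((595341689 : ℝ)/2490754175) + ((-4580548369 : ℝ)/4981508350) * t) - (((-18995082251 : ℝ)/22772609600) + ((-23450209609 : ℝ)/2846576200) * t) * (((21941044306 : ℝ)/7472262525) + ((-6487164638 : ℝ)/7472262525) * t) = 0 := hpt
        linear_combination -hpt'
    have hx2 := eq_add_of_sub_eq hsub
    rw [hx2]
    module
  have hcol : Collinear ℝ ({x2f t, x0f t, x1f t} : Set E2) :=
    collinear_insert_of_mem_affineSpan_pair (key ▸ AffineMap.lineMap_mem_affineSpan_pair c (x0f t) (x1f t))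
  have hset : ({x0f t, x1f t, x2f t} : Set E2) = {x2f t, x0f t, x1f t} := by
    ext y; simp only [Set.mem_insert_iff, Set.mem_singleton_iff]; tauto
  rw [hset]
  exact hcol

end Construction

/-- There is an elastic collision system of `3` unit discs in `ℝ²`
on the time interval `ℝ` with exactly `4` collisions, no two of them simultaneous,
and a time after all four collisions at which the three centers are collinear. -/
theorem three_discs_four_collisions :
    ∃ S : BallSystem (Fin 3) 2 Set.univ,
      S.collisions.Finite ∧ S.collisions.ncard = 4 ∧
      (∀ p ∈ S.collisions, ∀ q ∈ S.collisions, p.1 = q.1 → p = q) ∧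
      ∃ t : ℝ, (∀ p ∈ S.collisions, p.1 < t) ∧
        Collinear ℝ ({S.x 0 t, S.x 1 t, S.x 2 t} : Set (EuclideanSpace ℝ (Fin 2))) := by
  refine ⟨Sys, ?_, ?_, ?_, ?_⟩
  · rw [collisions_eq]; exact ecol_finite
  · rw [collisions_eq]; exact ecol_ncard
  · rw [collisions_eq]
    intro p hp q hq h
    simp only [Ecol, Set.mem_insert_iff, Set.mem_singleton_iff] at hp hq
    rcases hp with rfl|rfl|rfl|rfl <;> rcases hq with rfl|rfl|rfl|rfl <;>
      first
        | rfl
        | (exfalso; norm_num at h)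
  · obtain ⟨t, hta, hcol⟩ := final_collinear
    refine ⟨t, ?_, hcol⟩
    intro p hp
    rw [collisions_eq] at hp
    simp only [Ecol, Set.mem_insert_iff, Set.mem_singleton_iff] at hp
    rcases hp with rfl|rfl|rfl|rfl
    · show (0 : ℝ) < t; linarith
    · show (1/200 : ℝ) < t; linarith
    · show (1/40 : ℝ) < t; linarith
    · show (2 : ℝ) < t; linarith
end

section
/- Let T > 0 and δ > 0, and let F_k, F, G_k, G be ℝ^m-valued right-continuous functions with left limits on [0, T+2δ]. Assume: F_k → F and G_k → G in the Skorohod sense in D[0,R] for every 0 < R < T; there is a sequence t_k → T such that (i) F and G are constant on [T−2δ, T) and constant on (T, T+2δ]; (ii) F_k and G_k are constant on [T−δ, t_k) and constant on (t_k, T+δ]; (iii) there is a sequence α_k → 0 with |F_k(t_k) − F(T)| ≤ |G_k(t_k−) − G(T−)| + |F_k(t_k−) − F(T−)| + α_k for every k. Then F_k → F in the Skorohod sense in D[0, T+δ]. -/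
open Filter

noncomputable section

/-- A time change of `[0,T]`: a strictly increasing continuous bijection of `[0,T]`
onto itself. -/
def IsTimeChange (T : ℝ) (l : ℝ → ℝ) : Prop :=
  StrictMonoOn l (Set.Icc 0 T) ∧ ContinuousOn l (Set.Icc 0 T) ∧
    l '' Set.Icc 0 T = Set.Icc 0 T

/-- `SkorohodTendsto T Fk F` says that `dist₀^T (Fk k, F) → 0` as `k → ∞`, where
`dist₀^T (f,g)` is the infimum of `ε > 0` such that some time change `λ` of `[0,T]`
satisfies `‖λ‖_T ≤ ε` (with `‖λ‖_T = sup_{0 ≤ s < t ≤ T} |log((λ t - λ s)/(t - s))|`)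
and `sup_{0 ≤ t ≤ T} |f t - g (λ t)| ≤ ε`. -/
def SkorohodTendsto {m : ℕ} (T : ℝ) (Fk : ℕ → ℝ → EuclideanSpace ℝ (Fin m))
    (F : ℝ → EuclideanSpace ℝ (Fin m)) : Prop :=
  ∀ ε > (0 : ℝ), ∃ K : ℕ, ∀ k ≥ K, ∃ l : ℝ → ℝ, IsTimeChange T l ∧
    (∀ s t : ℝ, 0 ≤ s → s < t → t ≤ T → |Real.log ((l t - l s) / (t - s))| ≤ ε) ∧
    ∀ t ∈ Set.Icc (0 : ℝ) T, ‖Fk k t - F (l t)‖ ≤ ε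

/-- `F` is right-continuous with left limits on `[0,T']`. -/
def RCLLOn {m : ℕ} (F : ℝ → EuclideanSpace ℝ (Fin m)) (T' : ℝ) : Prop :=
  (∀ t ∈ Set.Ico (0 : ℝ) T', ContinuousWithinAt F (Set.Ici t) t) ∧
  (∀ t ∈ Set.Ioc (0 : ℝ) T', ∃ L, Tendsto F (nhdsWithin t (Set.Iio t)) (nhds L))

end


/-- Two-sided slope bound for `l` on `[a,b]`. -/
def Slope2 (l : ℝ → ℝ) (a b ε : ℝ) : Prop :=
  ∀ ⦃s t : ℝ⦄, a ≤ s → s ≤ t → t ≤ b →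
    Real.exp (-ε) * (t - s) ≤ l t - l s ∧ l t - l s ≤ Real.exp ε * (t - s)

theorem Slope2.glue {l : ℝ → ℝ} {a b c ε : ℝ} (hab : a ≤ b) (hbc : b ≤ c)
    (h1 : Slope2 l a b ε) (h2 : Slope2 l b c ε) : Slope2 l a c ε := by
  intro s t hs hst htc
  rcases le_or_gt t b with h | h
  · exact h1 hs hst h
  rcases le_or_gt b s with h' | h'
  · exact h2 h' hst htc
  obtain ⟨u1, u2⟩ := h1 hs h'.le le_rfl
  obtain ⟨v1, v2⟩ := h2 le_rfl h.le htc
  have e1 : Real.exp (-ε) * (t - s) = Real.exp (-ε) * (b - s) + Real.exp (-ε) * (t - b) := by ring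
  have e2 : Real.exp ε * (t - s) = Real.exp ε * (b - s) + Real.exp ε * (t - b) := by ring
  constructor <;> linarith

theorem Slope2.strictMonoOn {l : ℝ → ℝ} {a b ε : ℝ} (h : Slope2 l a b ε) :
    StrictMonoOn l (Set.Icc a b) := by
  intro x hx y hy hxy
  have h1 := (h hx.1 hxy.le hy.2).1
  have he : 0 < Real.exp (-ε) := Real.exp_pos _
  nlinarith

theorem Slope2.continuousOn {l : ℝ → ℝ} {a b ε : ℝ} (h : Slope2 l a b ε) :
    ContinuousOn l (Set.Icc a b) := by
  have key : ∀ x ∈ Set.Icc a b, ∀ y ∈ Set.Icc a b, x ≤ y →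
      dist (l x) (l y) ≤ Real.exp ε * dist x y := by
    intro x hx y hy hxy
    obtain ⟨h1, h2⟩ := h hx.1 hxy hy.2
    have he : 0 ≤ Real.exp (-ε) * (y - x) := by
      have := Real.exp_pos (-ε); nlinarith
    rw [Real.dist_eq, Real.dist_eq, abs_sub_comm x y, abs_of_nonneg (by linarith : (0:ℝ) ≤ y - x),
      abs_sub_comm (l x) (l y), abs_of_nonneg (by linarith : (0:ℝ) ≤ l y - l x)]
    linarith
  have hlip : LipschitzOnWith (Real.exp ε).toNNReal l (Set.Icc a b) := by
    apply LipschitzOnWith.of_dist_le_mul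
    intro x hx y hy
    rw [Real.coe_toNNReal _ (Real.exp_pos ε).le]
    rcases le_total x y with hxy | hxy
    · exact key x hx y hy hxy
    · rw [dist_comm (l x) (l y), dist_comm x y]; exact key y hy x hx hxy
  exact hlip.continuousOn

theorem Slope2.log_bound {l : ℝ → ℝ} {a b ε : ℝ} (h : Slope2 l a b ε) :
    ∀ s t : ℝ, a ≤ s → s < t → t ≤ b → |Real.log ((l t - l s) / (t - s))| ≤ ε := by
  intro s t hs hst htb
  obtain ⟨h1, h2⟩ := h hs hst.le htb
  have hts : (0:ℝ) < t - s := by linarith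
  have hr1 : Real.exp (-ε) ≤ (l t - l s) / (t - s) := (le_div_iff₀ hts).mpr (by linarith)
  have hr2 : (l t - l s) / (t - s) ≤ Real.exp ε := (div_le_iff₀ hts).mpr (by linarith)
  have hrpos : 0 < (l t - l s) / (t - s) := lt_of_lt_of_le (Real.exp_pos _) hr1
  rw [abs_le]
  constructor
  · have := (Real.le_log_iff_exp_le hrpos).mpr hr1; linarith
  · exact (Real.log_le_iff_le_exp hrpos).mpr hr2

theorem slope2_of_norm {l : ℝ → ℝ} {R ε ε' : ℝ} (hε' : ε' ≤ ε)
    (hmono : StrictMonoOn l (Set.Icc 0 R))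
    (hlog : ∀ s t : ℝ, 0 ≤ s → s < t → t ≤ R → |Real.log ((l t - l s) / (t - s))| ≤ ε') :
    Slope2 l 0 R ε := by
  intro s t hs hst htb
  rcases eq_or_lt_of_le hst with rfl | h
  · simp
  have hd : 0 < l t - l s := sub_pos.mpr (hmono ⟨hs, by linarith⟩ ⟨by linarith, htb⟩ h)
  have hts : (0:ℝ) < t - s := by linarith
  have hr : 0 < (l t - l s) / (t - s) := div_pos hd hts
  obtain ⟨hL, hU⟩ := abs_le.mp (hlog s t hs h htb)
  have h1 : Real.exp (-ε) ≤ (l t - l s) / (t - s) :=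
    (Real.le_log_iff_exp_le hr).mp (by linarith)
  have h2 : (l t - l s) / (t - s) ≤ Real.exp ε :=
    (Real.log_le_iff_le_exp hr).mp (by linarith)
  exact ⟨(le_div_iff₀ hts).mp h1, (div_le_iff₀ hts).mp h2⟩

theorem isTimeChange_endpoints {T : ℝ} {l : ℝ → ℝ} (hT : 0 ≤ T) (h : IsTimeChange T l) :
    l 0 = 0 ∧ l T = T := by
  obtain ⟨hm, hc, him⟩ := h
  have h0m : l 0 ∈ Set.Icc (0:ℝ) T := him ▸ Set.mem_image_of_mem l (Set.left_mem_Icc.mpr hT)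
  have hTm : l T ∈ Set.Icc (0:ℝ) T := him ▸ Set.mem_image_of_mem l (Set.right_mem_Icc.mpr hT)
  obtain ⟨x, hx, hlx⟩ : (0:ℝ) ∈ l '' Set.Icc 0 T := him.symm ▸ Set.left_mem_Icc.mpr hT
  obtain ⟨y, hy, hly⟩ : T ∈ l '' Set.Icc 0 T := him.symm ▸ Set.right_mem_Icc.mpr hT
  have h1 : l 0 ≤ l x := hm.monotoneOn (Set.left_mem_Icc.mpr hT) hx hx.1
  have h2 : l y ≤ l T := hm.monotoneOn hy (Set.right_mem_Icc.mpr hT) hy.2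
  constructor
  · linarith [h0m.1, hlx ▸ h1]
  · linarith [hTm.2, hly ▸ h2]

set_option maxHeartbeats 1000000 in
/-- extension lemma for Skorohod convergence. -/
theorem skorohod_extension {m : ℕ} (T δ : ℝ) (hT : 0 < T) (hδ : 0 < δ)
    (Fk Gk : ℕ → ℝ → EuclideanSpace ℝ (Fin m)) (F G : ℝ → EuclideanSpace ℝ (Fin m))
    (hFk : ∀ k, RCLLOn (Fk k) (T + 2 * δ)) (hGk : ∀ k, RCLLOn (Gk k) (T + 2 * δ))
    (hF : RCLLOn F (T + 2 * δ)) (hG : RCLLOn G (T + 2 * δ))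
    (hconvF : ∀ R : ℝ, 0 < R → R < T → SkorohodTendsto R Fk F)
    (hconvG : ∀ R : ℝ, 0 < R → R < T → SkorohodTendsto R Gk G)
    (tk : ℕ → ℝ) (htk : Filter.Tendsto tk Filter.atTop (nhds T))
    -- (i) `F` and `G` are constant on `[T-2δ, T)` and on `(T, T+2δ]`
    (hFc₁ : ∀ s ∈ Set.Ico (T - 2 * δ) T, ∀ t ∈ Set.Ico (T - 2 * δ) T, F s = F t)
    (hFc₂ : ∀ s ∈ Set.Ioc T (T + 2 * δ), ∀ t ∈ Set.Ioc T (T + 2 * δ), F s = F t)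
    (hGc₁ : ∀ s ∈ Set.Ico (T - 2 * δ) T, ∀ t ∈ Set.Ico (T - 2 * δ) T, G s = G t)
    (hGc₂ : ∀ s ∈ Set.Ioc T (T + 2 * δ), ∀ t ∈ Set.Ioc T (T + 2 * δ), G s = G t)
    -- (ii) `Fk k` and `Gk k` are constant on `[T-δ, tk k)` and on `(tk k, T+δ]`
    (hFkc₁ : ∀ k, ∀ s ∈ Set.Ico (T - δ) (tk k), ∀ t ∈ Set.Ico (T - δ) (tk k),
      Fk k s = Fk k t)
    (hFkc₂ : ∀ k, ∀ s ∈ Set.Ioc (tk k) (T + δ), ∀ t ∈ Set.Ioc (tk k) (T + δ),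
      Fk k s = Fk k t)
    (hGkc₁ : ∀ k, ∀ s ∈ Set.Ico (T - δ) (tk k), ∀ t ∈ Set.Ico (T - δ) (tk k),
      Gk k s = Gk k t)
    (hGkc₂ : ∀ k, ∀ s ∈ Set.Ioc (tk k) (T + δ), ∀ t ∈ Set.Ioc (tk k) (T + δ),
      Gk k s = Gk k t)
    -- (iii)
    (αk : ℕ → ℝ) (hα : Filter.Tendsto αk Filter.atTop (nhds 0))
    (hineq : ∀ k, ‖Fk k (tk k) - F T‖ ≤
      ‖Function.leftLim (Gk k) (tk k) - Function.leftLim G T‖ +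
      ‖Function.leftLim (Fk k) (tk k) - Function.leftLim F T‖ + αk k) :
    SkorohodTendsto (T + δ) Fk F := by
  intro ε hε
  have hε4 : (0:ℝ) < ε/4 := by linarith
  set d : ℝ := min δ T with hd
  have hd0 : 0 < d := lt_min hδ hT
  have hdδ : d ≤ δ := min_le_left _ _
  have hdT : d ≤ T := min_le_right _ _
  set R : ℝ := T - d/2 with hRdef
  have hR0 : 0 < R := by simp only [hRdef]; linarith
  have hRT : R < T := by simp only [hRdef]; linarith
  have hRδ : T - δ ≤ R := by simp only [hRdef]; linarith
  have hR2δ : T - 2*δ ≤ R := by simp only [hRdef]; linarith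
  obtain ⟨K₁, hK₁⟩ := hconvF R hR0 hRT (ε/4) hε4
  obtain ⟨K₂, hK₂⟩ := hconvG R hR0 hRT (ε/4) hε4
  have hexp1 : Real.exp (-ε) < 1 := by
    rw [← Real.exp_zero]; exact Real.exp_lt_exp.mpr (by linarith)
  have hexp2 : 1 < Real.exp ε := by
    rw [← Real.exp_zero]; exact Real.exp_lt_exp.mpr (by linarith)
  have hc₁ : Tendsto (fun k => (T - R) / (tk k - R)) atTop (nhds 1) := by
    have h1 : Tendsto (fun k => tk k - R) atTop (nhds (T - R)) := htk.sub_const R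
    have h2 := (tendsto_const_nhds (x := T - R) (f := (atTop : Filter ℕ))).div h1
      (ne_of_gt (sub_pos.mpr hRT))
    exact (by simpa [div_self (ne_of_gt (sub_pos.mpr hRT))] using h2 :
      Tendsto ((fun _ => T - R) / fun k => tk k - R) atTop (nhds 1))
  have hc₂ : Tendsto (fun k => δ / (T + δ - tk k)) atTop (nhds 1) := by
    have h1 : Tendsto (fun k => T + δ - tk k) atTop (nhds δ) := by
      have := (tendsto_const_nhds (x := T + δ) (f := (atTop : Filter ℕ))).sub htk
      simpa using this
    have h2 := (tendsto_const_nhds (x := δ) (f := (atTop : Filter ℕ))).div h1 (ne_of_gt hδ)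
    exact (by simpa [div_self (ne_of_gt hδ)] using h2 :
      Tendsto ((fun _ => δ) / fun k => T + δ - tk k) atTop (nhds 1))
  have hev : ∀ᶠ k in atTop, (R < tk k ∧ tk k < T + δ) ∧
      ((T - R)/(tk k - R) ∈ Set.Icc (Real.exp (-ε)) (Real.exp ε)) ∧
      ((δ/(T + δ - tk k)) ∈ Set.Icc (Real.exp (-ε)) (Real.exp ε)) ∧ |αk k| ≤ ε/4 := by
    have e1 : ∀ᶠ k in atTop, tk k ∈ Set.Ioo R (T + δ) :=
      htk (Ioo_mem_nhds hRT (by linarith))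
    have e2 := hc₁ (Icc_mem_nhds hexp1 hexp2)
    have e3 := hc₂ (Icc_mem_nhds hexp1 hexp2)
    have e4 : ∀ᶠ k in atTop, |αk k| ≤ ε/4 := by
      have := Metric.tendsto_nhds.mp hα (ε/4) hε4
      filter_upwards [this] with k hk
      rw [Real.dist_eq, sub_zero] at hk; exact hk.le
    filter_upwards [e1, e2, e3, e4] with k h1 h2 h3 h4
    exact ⟨⟨h1.1, h1.2⟩, h2, h3, h4⟩
  obtain ⟨K₃, hK₃⟩ := eventually_atTop.mp hev
  refine ⟨max (max K₁ K₂) K₃, fun k hk => ?_⟩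
  obtain ⟨lam, hlamTC, hlamlog, hlamsup⟩ :=
    hK₁ k (le_trans (le_trans (le_max_left _ _) (le_max_left _ _)) hk)
  obtain ⟨mu, hmuTC, hmulog, hmusup⟩ :=
    hK₂ k (le_trans (le_trans (le_max_right _ _) (le_max_left _ _)) hk)
  have hineqk := hineq k
  obtain ⟨⟨hs₁R, hs₁Tδ⟩, hc1mem, hc2mem, hαk⟩ := hK₃ k (le_trans (le_max_right _ _) hk)
  set s₁ := tk k with hs₁def
  set c₁ := (T - R)/(s₁ - R) with hc₁def
  set c₂ := δ/(T + δ - s₁) with hc₂def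
  obtain ⟨hlam0, hlamR⟩ := isTimeChange_endpoints hR0.le hlamTC
  obtain ⟨hmu0, hmuR⟩ := isTimeChange_endpoints hR0.le hmuTC
  have hs₁R' : (0:ℝ) < s₁ - R := by linarith
  have hmul1 : c₁ * (s₁ - R) = T - R := div_mul_cancel₀ _ (ne_of_gt hs₁R')
  have hmul2 : c₂ * (T + δ - s₁) = δ := div_mul_cancel₀ _ (ne_of_gt (by linarith : (0:ℝ) < T + δ - s₁))
  set l : ℝ → ℝ := fun t =>
    if t ≤ R then lam t else if t ≤ s₁ then R + (t - R) * c₁ else T + (t - s₁) * c₂ with hldef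
  have hl1 : ∀ t, t ≤ R → l t = lam t := fun t ht => if_pos ht
  have hl2 : ∀ t, R ≤ t → t ≤ s₁ → l t = R + (t - R) * c₁ := by
    intro t h1 h2
    rcases eq_or_lt_of_le h1 with heq | h
    · rw [← heq, hl1 R le_rfl, hlamR]; ring
    · simp only [hldef]
      rw [if_neg (not_le.mpr h), if_pos h2]
  have hl3 : ∀ t, s₁ ≤ t → l t = T + (t - s₁) * c₂ := by
    intro t h1
    rcases eq_or_lt_of_le h1 with heq | h
    · rw [← heq, hl2 s₁ (by linarith) le_rfl]
      have h3 : (s₁ - R) * c₁ = T - R := by rw [mul_comm]; exact hmul1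
      rw [h3]; ring
    · simp only [hldef]
      rw [if_neg (by push_neg; linarith), if_neg (not_le.mpr h)]
  have S1 : Slope2 l 0 R ε := by
    intro s t hs hst htb
    rw [hl1 t htb, hl1 s (hst.trans htb)]
    exact slope2_of_norm (by linarith : ε/4 ≤ ε) hlamTC.1 hlamlog hs hst htb
  have S2 : Slope2 l R s₁ ε := by
    intro s t hs hst htb
    rw [hl2 t (hs.trans hst) htb, hl2 s hs (hst.trans htb)]
    have h3 : R + (t - R) * c₁ - (R + (s - R) * c₁) = c₁ * (t - s) := by ring
    rw [h3]
    constructor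
    · nlinarith [hc1mem.1, sub_nonneg.mpr hst]
    · nlinarith [hc1mem.2, sub_nonneg.mpr hst]
  have S3 : Slope2 l s₁ (T + δ) ε := by
    intro s t hs hst htb
    rw [hl3 t (hs.trans hst), hl3 s hs]
    have h3 : T + (t - s₁) * c₂ - (T + (s - s₁) * c₂) = c₂ * (t - s) := by ring
    rw [h3]
    constructor
    · nlinarith [hc2mem.1, sub_nonneg.mpr hst]
    · nlinarith [hc2mem.2, sub_nonneg.mpr hst]
  have S : Slope2 l 0 (T + δ) ε :=
    (S1.glue hR0.le hs₁R.le S2).glue (by linarith) (by linarith) S3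
  have hl0 : l 0 = 0 := by rw [hl1 0 hR0.le, hlam0]
  have hlTδ : l (T + δ) = T + δ := by
    rw [hl3 (T + δ) (by linarith)]
    have h3 : (T + δ - s₁) * c₂ = δ := by rw [mul_comm]; exact hmul2
    rw [h3]
  have hTC : IsTimeChange (T + δ) l := by
    refine ⟨S.strictMonoOn, S.continuousOn, ?_⟩
    apply Set.Subset.antisymm
    · rintro y ⟨x, hx, rfl⟩
      constructor
      · have h4 := S.strictMonoOn.monotoneOn (Set.left_mem_Icc.mpr (by linarith)) hx hx.1
        rwa [hl0] at h4
      · have h4 := S.strictMonoOn.monotoneOn hx (Set.right_mem_Icc.mpr (by linarith)) hx.2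
        rwa [hlTδ] at h4
    · have h4 := intermediate_value_Icc (by linarith : (0:ℝ) ≤ T + δ) S.continuousOn
      rw [hl0, hlTδ] at h4
      exact h4
  have hFRbound : ‖Fk k R - F R‖ ≤ ε/4 := by
    have := hlamsup R ⟨hR0.le, le_rfl⟩; rwa [hlamR] at this
  have hGRbound : ‖Gk k R - G R‖ ≤ ε/4 := by
    have := hmusup R ⟨hR0.le, le_rfl⟩; rwa [hmuR] at this
  have hLF : Function.leftLim F T = F R := by
    apply leftLim_eq_of_tendsto
    apply Tendsto.congr' _ tendsto_const_nhds
    filter_upwards [Ioo_mem_nhdsLT_of_mem (⟨hRT, le_rfl⟩ : T ∈ Set.Ioc R T)] with x hx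
    exact hFc₁ R ⟨by linarith, hRT⟩ x ⟨by linarith [hx.1], hx.2⟩
  have hLG : Function.leftLim G T = G R := by
    apply leftLim_eq_of_tendsto
    apply Tendsto.congr' _ tendsto_const_nhds
    filter_upwards [Ioo_mem_nhdsLT_of_mem (⟨hRT, le_rfl⟩ : T ∈ Set.Ioc R T)] with x hx
    exact hGc₁ R ⟨by linarith, hRT⟩ x ⟨by linarith [hx.1], hx.2⟩
  have hLFk : Function.leftLim (Fk k) s₁ = Fk k R := by
    apply leftLim_eq_of_tendsto
    apply Tendsto.congr' _ tendsto_const_nhds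
    filter_upwards [Ioo_mem_nhdsLT_of_mem (⟨hs₁R, le_rfl⟩ : s₁ ∈ Set.Ioc R s₁)] with x hx
    exact hFkc₁ k R ⟨by linarith, hs₁R⟩ x ⟨by linarith [hx.1], hx.2⟩
  have hLGk : Function.leftLim (Gk k) s₁ = Gk k R := by
    apply leftLim_eq_of_tendsto
    apply Tendsto.congr' _ tendsto_const_nhds
    filter_upwards [Ioo_mem_nhdsLT_of_mem (⟨hs₁R, le_rfl⟩ : s₁ ∈ Set.Ioc R s₁)] with x hx
    exact hGkc₁ k R ⟨by linarith, hs₁R⟩ x ⟨by linarith [hx.1], hx.2⟩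
  have hjump : ‖Fk k s₁ - F T‖ ≤ 3 * (ε/4) := by
    rw [hLFk, hLF, hLGk, hLG] at hineqk
    have hα4 : αk k ≤ ε/4 := le_trans (le_abs_self _) hαk
    calc ‖Fk k s₁ - F T‖ ≤ ‖Gk k R - G R‖ + ‖Fk k R - F R‖ + αk k := hineqk
      _ ≤ 3 * (ε/4) := by linarith
  have hFrc : F T = F (T + δ) := by
    have h1 : Tendsto F (nhdsWithin T (Set.Ioi T)) (nhds (F T)) :=
      (hF.1 T ⟨hT.le, by linarith⟩).mono Set.Ioi_subset_Ici_self
    have h2 : Tendsto F (nhdsWithin T (Set.Ioi T)) (nhds (F (T + δ))) := by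
      apply Tendsto.congr' _ tendsto_const_nhds
      filter_upwards [Ioc_mem_nhdsGT_of_mem (⟨le_rfl, by linarith⟩ : T ∈ Set.Ico T (T + δ))]
        with x hx
      exact hFc₂ (T + δ) ⟨by linarith, by linarith⟩ x ⟨hx.1, by linarith [hx.2]⟩
    exact tendsto_nhds_unique h1 h2
  have hFkrc : Fk k s₁ = Fk k (T + δ) := by
    have h1 : Tendsto (Fk k) (nhdsWithin s₁ (Set.Ioi s₁)) (nhds (Fk k s₁)) :=
      ((hFk k).1 s₁ ⟨by linarith, by linarith⟩).mono Set.Ioi_subset_Ici_self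
    have h2 : Tendsto (Fk k) (nhdsWithin s₁ (Set.Ioi s₁)) (nhds (Fk k (T + δ))) := by
      apply Tendsto.congr' _ tendsto_const_nhds
      filter_upwards [Ioc_mem_nhdsGT_of_mem (⟨le_rfl, hs₁Tδ⟩ : s₁ ∈ Set.Ico s₁ (T + δ))]
        with x hx
      exact hFkc₂ k (T + δ) ⟨hs₁Tδ, le_rfl⟩ x hx
    exact tendsto_nhds_unique h1 h2
  refine ⟨l, hTC, S.log_bound, ?_⟩
  intro t ht
  rcases le_or_gt t R with htR | htR
  · rw [hl1 t htR]
    exact (hlamsup t ⟨ht.1, htR⟩).trans (by linarith)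
  rcases lt_trichotomy t s₁ with h2 | h2 | h2
  · have hc₁pos : 0 < c₁ := lt_of_lt_of_le (Real.exp_pos _) hc1mem.1
    have hlt : l t = R + (t - R) * c₁ := hl2 t htR.le h2.le
    have hlt1 : R ≤ l t := by rw [hlt]; nlinarith
    have hlt2 : l t < T := by
      rw [hlt]
      have h5 : (t - R) * c₁ < (s₁ - R) * c₁ := by nlinarith
      have h6 : (s₁ - R) * c₁ = T - R := by rw [mul_comm]; exact hmul1
      linarith
    have e1 : Fk k t = Fk k R := hFkc₁ k t ⟨by linarith, h2⟩ R ⟨by linarith, hs₁R⟩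
    have e2 : F (l t) = F R := hFc₁ (l t) ⟨by linarith, hlt2⟩ R ⟨by linarith, hRT⟩
    rw [e1, e2]; linarith [hFRbound]
  · have hls : l t = T := by rw [h2, hl3 s₁ le_rfl]; ring
    rw [hls, h2]
    linarith [hjump]
  · have hc₂pos : 0 < c₂ := lt_of_lt_of_le (Real.exp_pos _) hc2mem.1
    have hlt : l t = T + (t - s₁) * c₂ := hl3 t h2.le
    have hlt1 : T < l t := by rw [hlt]; nlinarith
    have hlt2 : l t ≤ T + δ := by
      rw [hlt]
      have h5 : (t - s₁) * c₂ ≤ (T + δ - s₁) * c₂ := by nlinarith [ht.2]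
      have h6 : (T + δ - s₁) * c₂ = δ := by rw [mul_comm]; exact hmul2
      linarith
    have e1 : Fk k t = Fk k (T + δ) := hFkc₂ k t ⟨h2, ht.2⟩ (T + δ) ⟨hs₁Tδ, le_rfl⟩
    have e2 : F (l t) = F (T + δ) := hFc₂ (l t) ⟨hlt1, by linarith⟩ (T + δ) ⟨by linarith, by linarith⟩
    rw [e1, e2, ← hFkrc, ← hFrc]
    linarith [hjump]
end

section
/- Let T > 0 and α > 0, and let F_k, F be ℝ^m-valued right-continuous functions with left limits on [0, T+α]. Assume F_k → F in the Skorohod sense in D[0,R] for every 0 < R < T, and that F_k (for every k) and F are constant on the interval [T−α, T+α]. Then F_k → F in the Skorohod sense in D[0, T+α]. -/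
open Filter

/-- corollary of the extension lemma. -/
theorem skorohod_extension_const {m : ℕ} (T α : ℝ) (hT : 0 < T) (hα : 0 < α)
    (Fk : ℕ → ℝ → EuclideanSpace ℝ (Fin m)) (F : ℝ → EuclideanSpace ℝ (Fin m))
    (hFk : ∀ k, RCLLOn (Fk k) (T + α)) (hF : RCLLOn F (T + α))
    (hconv : ∀ R : ℝ, 0 < R → R < T → SkorohodTendsto R Fk F)
    (hFkc : ∀ k, ∀ s ∈ Set.Icc (T - α) (T + α), ∀ t ∈ Set.Icc (T - α) (T + α),
      Fk k s = Fk k t)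
    (hFc : ∀ s ∈ Set.Icc (T - α) (T + α), ∀ t ∈ Set.Icc (T - α) (T + α), F s = F t) :
    SkorohodTendsto (T + α) Fk F := by
  intro ε hε
  set R : ℝ := max (T - α / 2) (T / 2) with hRdef
  have hR0 : 0 < R := lt_of_lt_of_le (by linarith) (le_max_right _ _)
  have hRT : R < T := max_lt (by linarith) (by linarith)
  have hRa : T - α < R := lt_of_lt_of_le (by linarith) (le_max_left _ _)
  have hRTa : R ≤ T + α := by linarith
  obtain ⟨K, hK⟩ := hconv R hR0 hRT ε hε
  refine ⟨K, fun k hk => ?_⟩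
  obtain ⟨l, ⟨hmono, hcont, himg⟩, hlog, hsup⟩ := hK k hk
  have hmem : ∀ s ∈ Set.Icc (0:ℝ) R, l s ∈ Set.Icc (0:ℝ) R := fun s hs =>
    himg ▸ Set.mem_image_of_mem l hs
  -- l 0 = 0 and l R = R
  have hl0 : l 0 = 0 := by
    obtain ⟨x, hx, hlx⟩ : (0:ℝ) ∈ l '' Set.Icc 0 R := by
      rw [himg]; exact ⟨le_refl _, hR0.le⟩
    have hx0 : x = 0 := by
      by_contra h
      have hx0' : 0 < x := lt_of_le_of_ne hx.1 (Ne.symm h)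
      have h1 := hmono ⟨le_refl _, hR0.le⟩ hx hx0'
      have h2 := (hmem 0 ⟨le_refl _, hR0.le⟩).1
      linarith
    exact hx0 ▸ hlx
  have hlR : l R = R := by
    obtain ⟨x, hx, hlx⟩ : R ∈ l '' Set.Icc 0 R := by
      rw [himg]; exact ⟨hR0.le, le_refl _⟩
    have hxR : x = R := by
      by_contra h
      have hx' : x < R := lt_of_le_of_ne hx.2 h
      have h1 := hmono hx ⟨hR0.le, le_refl _⟩ hx'
      have h2 := (hmem R ⟨hR0.le, le_refl _⟩).2
      linarith
    exact hxR ▸ hlx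
  -- the extended time change
  set L : ℝ → ℝ := fun t => l (min t R) + max (t - R) 0 with hLdef
  have hLle : ∀ t, t ≤ R → L t = l t := by
    intro t ht
    simp only [hLdef, min_eq_left ht, max_eq_right (by linarith : t - R ≤ 0), add_zero]
  have hLge : ∀ t, R ≤ t → L t = t := by
    intro t ht
    simp only [hLdef, min_eq_right ht, hlR, max_eq_left (by linarith : (0:ℝ) ≤ t - R)]
    ring
  have hL0 : L 0 = 0 := by rw [hLle 0 hR0.le, hl0]
  have hLT : L (T + α) = T + α := hLge _ hRTa
  -- key two-sided estimate
  have key : ∀ s t : ℝ, 0 ≤ s → s < t → t ≤ T + α →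
      Real.exp (-ε) * (t - s) ≤ L t - L s ∧ L t - L s ≤ Real.exp ε * (t - s) := by
    intro s t hs hst ht
    set ms := min s R with hms
    set mt := min t R with hmt
    have hms0 : 0 ≤ ms := le_min hs hR0.le
    have hmtR : mt ≤ R := min_le_right _ _
    have hmsmt : ms ≤ mt := min_le_min hst.le (le_refl R)
    have hdle : mt - ms ≤ t - s := by
      rcases le_total t R with h | h
      · rw [hmt, hms, min_eq_left h, min_eq_left (le_trans hst.le h)]
      · rcases le_total s R with h' | h'
        · rw [hmt, hms, min_eq_right h, min_eq_left h']; linarith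
        · rw [hmt, hms, min_eq_right h, min_eq_right h']; linarith
    have hdecomp : L t - L s = (l mt - l ms) + ((t - s) - (mt - ms)) := by
      have hmax : ∀ u : ℝ, max (u - R) 0 = u - min u R := by
        intro u
        rcases le_total u R with h | h
        · rw [min_eq_left h, max_eq_right (by linarith : u - R ≤ 0)]; ring
        · rw [min_eq_right h, max_eq_left (by linarith : (0:ℝ) ≤ u - R)]
      simp only [hLdef, hmax]
      ring
    have hpart1 : Real.exp (-ε) * (mt - ms) ≤ l mt - l ms ∧
        l mt - l ms ≤ Real.exp ε * (mt - ms) := by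
      rcases eq_or_lt_of_le hmsmt with h | h
      · rw [h]; simp
      · have hpos : 0 < l mt - l ms :=
          sub_pos.mpr (hmono ⟨hms0, le_trans hmsmt hmtR⟩ ⟨le_trans hms0 hmsmt, hmtR⟩ h)
        have hden : 0 < mt - ms := sub_pos.mpr h
        have hr := hlog ms mt hms0 h hmtR
        have hrat : 0 < (l mt - l ms) / (mt - ms) := div_pos hpos hden
        have h1 : (l mt - l ms) / (mt - ms) ≤ Real.exp ε := by
          rw [← Real.exp_log hrat]
          exact Real.exp_le_exp.mpr (le_trans (le_abs_self _) hr)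
        have h2 : Real.exp (-ε) ≤ (l mt - l ms) / (mt - ms) := by
          rw [← Real.exp_log hrat]
          exact Real.exp_le_exp.mpr (abs_le.mp hr).1
        exact ⟨(le_div_iff₀ hden).mp h2, (div_le_iff₀ hden).mp h1⟩
    have hd2 : 0 ≤ (t - s) - (mt - ms) := by linarith
    have he1 : Real.exp (-ε) ≤ 1 := Real.exp_le_one_iff.mpr (by linarith)
    have he2 : (1:ℝ) ≤ Real.exp ε := Real.one_le_exp hε.le
    have hp2a : Real.exp (-ε) * ((t - s) - (mt - ms)) ≤ (t - s) - (mt - ms) :=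
      mul_le_of_le_one_left hd2 he1
    have hp2b : (t - s) - (mt - ms) ≤ Real.exp ε * ((t - s) - (mt - ms)) :=
      le_mul_of_one_le_left hd2 he2
    have e1 : Real.exp (-ε) * (t - s)
        = Real.exp (-ε) * (mt - ms) + Real.exp (-ε) * ((t - s) - (mt - ms)) := by ring
    have e2 : Real.exp ε * (t - s)
        = Real.exp ε * (mt - ms) + Real.exp ε * ((t - s) - (mt - ms)) := by ring
    constructor
    · rw [hdecomp, e1]; linarith [hpart1.1]
    · rw [hdecomp, e2]; linarith [hpart1.2]
  have hmonoL : StrictMonoOn L (Set.Icc 0 (T + α)) := by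
    intro s hs t ht hst
    have h := (key s t hs.1 hst ht.2).1
    have : 0 < Real.exp (-ε) * (t - s) := mul_pos (Real.exp_pos _) (by linarith)
    linarith
  have hcontL : ContinuousOn L (Set.Icc 0 (T + α)) := by
    have hc1 : ContinuousOn (fun t => l (min t R)) (Set.Icc 0 (T + α)) :=
      hcont.comp ((continuous_id.min continuous_const).continuousOn)
        (fun x hx => ⟨le_min hx.1 hR0.le, min_le_right _ _⟩)
    exact hc1.add (((continuous_id.sub continuous_const).max continuous_const).continuousOn)
  have himgL : L '' Set.Icc 0 (T + α) = Set.Icc 0 (T + α) := by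
    apply Set.Subset.antisymm
    · rintro _ ⟨x, hx, rfl⟩
      constructor
      · have := hmonoL.monotoneOn ⟨le_refl _, by linarith⟩ hx hx.1
        rw [hL0] at this; exact this
      · have := hmonoL.monotoneOn hx ⟨by linarith, le_refl _⟩ hx.2
        rw [hLT] at this; exact this
    · have h := intermediate_value_Icc (by linarith : (0:ℝ) ≤ T + α) hcontL
      rw [hL0, hLT] at h
      exact h
  refine ⟨L, ⟨hmonoL, hcontL, himgL⟩, ?_, ?_⟩
  · intro s t hs hst ht
    obtain ⟨h1, h2⟩ := key s t hs hst ht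
    have hts : 0 < t - s := by linarith
    have hr : 0 < (L t - L s) / (t - s) :=
      div_pos (lt_of_lt_of_le (mul_pos (Real.exp_pos _) hts) h1) hts
    rw [abs_le]
    constructor
    · exact (Real.le_log_iff_exp_le hr).mpr ((le_div_iff₀ hts).mpr h1)
    · exact (Real.log_le_iff_le_exp hr).mpr ((div_le_iff₀ hts).mpr h2)
  · intro t ht
    rcases le_or_gt t R with h | h
    · rw [hLle t h]
      exact hsup t ⟨ht.1, h⟩
    · have hRmem : R ∈ Set.Icc (T - α) (T + α) := ⟨hRa.le, by linarith⟩
      have htmem : t ∈ Set.Icc (T - α) (T + α) := ⟨by linarith, ht.2⟩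
      rw [hLge t h.le, hFkc k t htmem R hRmem, hFc t htmem R hRmem]
      nth_rewrite 2 [← hlR]
      exact hsup R ⟨hR0.le, le_refl R⟩
end

section
/- Let T > 0 and C > 0. Let X_k, Z : [0,∞) → ℝ^ℓ and suppose there are right-continuous functions with left limits V_k, V : [0,∞) → ℝ^ℓ such that |V_k(u)| ≤ C and |V(u)| ≤ C for all u and all k, X_k(t) = X_k(0) + ∫₀ᵗ V_k(u) du and Z(t) = Z(0) + ∫₀ᵗ V(u) du for all t ≥ 0. If X_k(0) → Z(0) and V_k → V in the Skorohod sense in D[0,R] for every 0 < R < T, then X_k converges to Z uniformly on [0,T]. -/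
open Filter MeasureTheory Set Topology
set_option maxHeartbeats 2000000

section AuxLemmas

variable {m : ℕ}

lemma meas_comp_countable {g : ℝ → ℝ} (hg : Measurable g)
    (hc : (Set.range g).Countable) (f : ℝ → EuclideanSpace ℝ (Fin m)) :
    Measurable (f ∘ g) := by
  intro A hA
  have h : (f ∘ g) ⁻¹' A = g ⁻¹' (f ⁻¹' A ∩ Set.range g) := by
    ext x; simp [Set.mem_preimage]
  rw [h]
  exact hg (Set.Countable.measurableSet (hc.mono Set.inter_subset_right))

lemma measurable_of_rc (f : ℝ → EuclideanSpace ℝ (Fin m))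
    (hf : ∀ t, ContinuousWithinAt f (Set.Ici t) t) : Measurable f := by
  set a : ℕ → ℝ → ℝ := fun n u => ((⌊(n+1 : ℝ) * u⌋ : ℝ) + 1) / (n+1) with ha
  have hnpos : ∀ n : ℕ, (0:ℝ) < (n+1:ℝ) := fun n => by positivity
  have hgt : ∀ n u, u < a n u := by
    intro n u
    rw [ha, lt_div_iff₀ (hnpos n)]
    have := Int.lt_floor_add_one ((n+1:ℝ) * u)
    linarith [this]
  have hle : ∀ n u, a n u ≤ u + 1/(n+1) := by
    intro n u
    rw [ha, div_le_iff₀ (hnpos n)]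
    have := Int.floor_le ((n+1:ℝ) * u)
    have h2 : (0:ℝ) < (n:ℝ)+1 := hnpos n
    field_simp
    nlinarith
  have hmeas : ∀ n, Measurable (fun u => f (a n u)) := by
    intro n
    have hq : Measurable (a n) := by
      apply Measurable.div _ measurable_const
      exact (measurable_from_top.comp
        (Int.measurable_floor.comp (measurable_const.mul measurable_id))).add measurable_const
    have hcount : (Set.range (a n)).Countable := by
      apply Set.Countable.mono _ (Set.countable_range (fun i : ℤ => ((i:ℝ)+1)/(n+1)))
      rintro x ⟨u, rfl⟩; exact ⟨⌊(n+1:ℝ)*u⌋, rfl⟩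
    exact meas_comp_countable hq hcount f
  apply measurable_of_tendsto_metrizable' atTop hmeas
  rw [tendsto_pi_nhds]
  intro u
  have htend : Tendsto (fun n => a n u) atTop (nhds u) := by
    have h1 : Tendsto (fun n : ℕ => u + 1/(n+1:ℝ)) atTop (nhds (u+0)) :=
      tendsto_const_nhds.add tendsto_one_div_add_atTop_nhds_zero_nat
    rw [add_zero] at h1
    exact tendsto_of_tendsto_of_tendsto_of_le_of_le tendsto_const_nhds h1
      (fun n => (hgt n u).le) (fun n => hle n u)
  have htend' : Tendsto (fun n => a n u) atTop (nhdsWithin u (Set.Ici u)) :=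
    tendsto_nhdsWithin_of_tendsto_nhds_of_eventually_within _ htend
      (Eventually.of_forall fun n => (hgt n u).le)
  exact (hf u).tendsto.comp htend'

lemma countable_discont (f : ℝ → EuclideanSpace ℝ (Fin m))
    (hrc : ∀ t, ContinuousWithinAt f (Set.Ici t) t)
    (hll : ∀ t : ℝ, 0 < t → ∃ L, Tendsto f (nhdsWithin t (Set.Iio t)) (nhds L)) :
    Set.Countable {t : ℝ | 0 < t ∧ ¬ ContinuousAt f t} := by
  classical
  set L : ℝ → EuclideanSpace ℝ (Fin m) :=
    fun t => if h : 0 < t then (hll t h).choose else 0 with hL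
  have hLt : ∀ t : ℝ, 0 < t → Tendsto f (nhdsWithin t (Set.Iio t)) (nhds (L t)) := by
    intro t ht; rw [hL]; simp only [dif_pos ht]; exact (hll t ht).choose_spec
  have hjump : ∀ t : ℝ, 0 < t → ¬ ContinuousAt f t → 0 < ‖f t - L t‖ := by
    intro t ht hnc
    rw [norm_pos_iff, sub_ne_zero]
    intro heq
    apply hnc
    rw [ContinuousAt, ← nhdsLT_sup_nhdsGE t, tendsto_sup]
    exact ⟨heq ▸ hLt t ht, (hrc t).tendsto⟩
  set J : ℕ → Set ℝ := fun n => {t : ℝ | 0 < t ∧ ¬ ContinuousAt f t ∧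
      1/((n:ℝ)+1) < ‖f t - L t‖} with hJ
  have hsub : {t : ℝ | 0 < t ∧ ¬ ContinuousAt f t} ⊆ ⋃ n, J n := by
    intro t ⟨ht, hnc⟩
    obtain ⟨n, hn⟩ := exists_nat_one_div_lt (hjump t ht hnc)
    exact Set.mem_iUnion.2 ⟨n, ht, hnc, hn⟩
  apply Set.Countable.mono hsub
  apply Set.countable_iUnion
  intro n
  have key : ∀ t ∈ J n, ∃ q : ℚ, t < (q:ℝ) ∧ ∀ v ∈ J n, t < v → (q:ℝ) < v := by
    intro t ht
    obtain ⟨ht0, hnc, hjt⟩ := ht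
    set r : ℝ := 1/(3*((n:ℝ)+1)) with hr
    have hrpos : 0 < r := by positivity
    have := (hrc t)
    rw [Metric.continuousWithinAt_iff] at this
    obtain ⟨δ, hδpos, hδ⟩ := this r hrpos
    have hgap : ∀ v, t < v → v < t + δ → v ∉ J n := by
      intro v htv hvδ hv
      obtain ⟨hv0, hvnc, hjv⟩ := hv
      have hfb : ∀ s, t ≤ s → s < t + δ → dist (f s) (f t) < r := by
        intro s hs1 hs2
        exact hδ hs1 (by rw [Real.dist_eq, abs_lt]; constructor <;> linarith)
      have hLb : dist (L v) (f t) ≤ r := by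
        have hev : ∀ᶠ s in nhdsWithin v (Set.Iio v), dist (f s) (f t) ≤ r := by
          filter_upwards [Ioo_mem_nhdsLT_of_mem (show v ∈ Set.Ioc t v from ⟨htv, le_refl v⟩)]
            with s hs
          exact (hfb s hs.1.le (lt_trans hs.2 hvδ)).le
        have htd : Tendsto (fun s => dist (f s) (f t)) (nhdsWithin v (Set.Iio v))
            (nhds (dist (L v) (f t))) := ((hLt v hv0).dist tendsto_const_nhds)
        exact le_of_tendsto htd hev
      have hfv : dist (f v) (f t) < r := hfb v htv.le hvδ
      have : ‖f v - L v‖ ≤ 2 * r := by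
        have := dist_triangle (f v) (f t) (L v)
        rw [← dist_eq_norm]
        rw [dist_comm (L v) (f t)] at hLb
        linarith
      have hcon : 1/((n:ℝ)+1) < 2 * r := lt_of_lt_of_le hjv this
      have hre : (2:ℝ) * r = (2/3) * (1/((n:ℝ)+1)) := by rw [hr]; field_simp
      have hpos : (0:ℝ) < 1/((n:ℝ)+1) := by positivity
      rw [hre] at hcon
      linarith
    obtain ⟨q, hq1, hq2⟩ := exists_rat_btwn (show t < t + δ by linarith)
    refine ⟨q, hq1, fun v hv htv => ?_⟩
    by_contra hle
    push_neg at hle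
    exact hgap v htv (lt_of_le_of_lt hle hq2) hv
  choose! q hq1 hq2 using key
  rw [← Set.countable_coe_iff]
  have hinj : Function.Injective (fun t : J n => q t) := by
    rintro ⟨t, ht⟩ ⟨t', ht'⟩ heq
    simp only [Subtype.mk_eq_mk]
    by_contra hne
    rcases lt_or_gt_of_ne hne with h | h
    · have h1 := hq2 t ht t' ht' h
      have h2 := hq1 t' ht'
      simp only at heq
      rw [heq] at h1
      linarith
    · have h1 := hq2 t' ht' t ht h
      have h2 := hq1 t ht
      simp only at heq
      rw [heq] at h2
      linarith
  exact Function.Injective.countable hinj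

lemma integrableOn_bdd (g : ℝ → EuclideanSpace ℝ (Fin m)) (K : ℝ)
    (hg : Measurable g) (hb : ∀ u, ‖g u‖ ≤ K) (a b : ℝ) :
    IntegrableOn g (Set.Ioc a b) := by
  haveI : IsFiniteMeasure (volume.restrict (Set.Ioc a b)) := by
    constructor
    rw [Measure.restrict_apply_univ, Real.volume_Ioc]
    exact ENNReal.ofReal_lt_top
  exact Integrable.mono' (integrable_const K) hg.aestronglyMeasurable
    (Filter.Eventually.of_forall hb)

lemma intervalIntegrable_bdd (g : ℝ → EuclideanSpace ℝ (Fin m)) (K : ℝ)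
    (hg : Measurable g) (hb : ∀ u, ‖g u‖ ≤ K) (a b : ℝ) :
    IntervalIntegrable g volume a b :=
  ⟨integrableOn_bdd g K hg hb a b, integrableOn_bdd g K hg hb b a⟩

lemma integrableOn_bdd' (g : ℝ → ℝ) (K : ℝ)
    (hg : Measurable g) (hb : ∀ u, |g u| ≤ K) (a b : ℝ) :
    IntegrableOn g (Set.Ioc a b) := by
  haveI : IsFiniteMeasure (volume.restrict (Set.Ioc a b)) := by
    constructor
    rw [Measure.restrict_apply_univ, Real.volume_Ioc]
    exact ENNReal.ofReal_lt_top
  exact Integrable.mono' (integrable_const K) hg.aestronglyMeasurable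
    (Filter.Eventually.of_forall hb)

lemma intervalIntegrable_bdd' (g : ℝ → ℝ) (K : ℝ)
    (hg : Measurable g) (hb : ∀ u, |g u| ≤ K) (a b : ℝ) :
    IntervalIntegrable g volume a b :=
  ⟨integrableOn_bdd' g K hg hb a b, integrableOn_bdd' g K hg hb b a⟩

lemma dct_lemma (R C : ℝ) (hR : 0 < R) (hC : 0 < C)
    (f : ℝ → EuclideanSpace ℝ (Fin m)) (hmeas : Measurable f)
    (hb : ∀ u, ‖f u‖ ≤ C)
    (hae : ∀ᵐ u ∂(volume.restrict (Set.Ioc (0:ℝ) R)), ContinuousAt f u)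
    (η : ℝ) (hη : 0 < η) :
    ∃ δ > (0:ℝ), ∀ φ : ℝ → ℝ, Measurable φ → (∀ u, |φ u - u| ≤ δ) →
      ∫ u in Set.Ioc (0:ℝ) R, ‖f (φ u) - f u‖ ≤ η := by
  by_contra hcon
  push_neg at hcon
  have hchoice : ∀ n : ℕ, ∃ φ : ℝ → ℝ, Measurable φ ∧ (∀ u, |φ u - u| ≤ 1/(n+1)) ∧
      η < ∫ u in Set.Ioc (0:ℝ) R, ‖f (φ u) - f u‖ := by
    intro n
    obtain ⟨φ, h1, h2, h3⟩ := hcon (1/(n+1)) (by positivity)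
    exact ⟨φ, h1, h2, h3⟩
  choose φ hφm hφc hφi using hchoice
  haveI : IsFiniteMeasure (volume.restrict (Set.Ioc (0:ℝ) R)) := by
    constructor
    rw [Measure.restrict_apply_univ, Real.volume_Ioc]
    exact ENNReal.ofReal_lt_top
  have hDCT : Tendsto (fun n => ∫ u in Set.Ioc (0:ℝ) R, ‖f (φ n u) - f u‖) atTop
      (nhds (∫ _u in Set.Ioc (0:ℝ) R, (0:ℝ))) := by
    apply MeasureTheory.tendsto_integral_of_dominated_convergence (fun _ => 2*C)
    · intro n
      exact (((hmeas.comp (hφm n)).sub hmeas).norm).aestronglyMeasurable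
    · exact integrable_const (2*C)
    · intro n
      apply Filter.Eventually.of_forall
      intro u
      have h1 := hb (φ n u)
      have h2 := hb u
      have := norm_sub_le (f (φ n u)) (f u)
      rw [Real.norm_eq_abs, abs_of_nonneg (norm_nonneg _)]
      linarith
    · filter_upwards [hae] with u hu
      have hφu : Tendsto (fun n => φ n u) atTop (nhds u) := by
        have h1 : Tendsto (fun n : ℕ => u + 1/(n+1:ℝ)) atTop (nhds (u+0)) :=
          tendsto_const_nhds.add tendsto_one_div_add_atTop_nhds_zero_nat
        have h2 : Tendsto (fun n : ℕ => u - 1/(n+1:ℝ)) atTop (nhds (u-0)) :=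
          tendsto_const_nhds.sub tendsto_one_div_add_atTop_nhds_zero_nat
        rw [add_zero] at h1; rw [sub_zero] at h2
        apply tendsto_of_tendsto_of_tendsto_of_le_of_le h2 h1
        · intro n; have := abs_le.mp (hφc n u); linarith [this.1]
        · intro n; have := abs_le.mp (hφc n u); linarith [this.2]
      have : Tendsto (fun n => f (φ n u) - f u) atTop (nhds (f u - f u)) :=
        ((hu.tendsto).comp hφu).sub tendsto_const_nhds
      rw [sub_self] at this
      simpa using this.norm
  rw [integral_zero] at hDCT
  have hge : η ≤ 0 := ge_of_tendsto' hDCT (fun n => (hφi n).le) |>.trans (le_refl 0)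
  linarith

lemma rc_max (f : ℝ → EuclideanSpace ℝ (Fin m))
    (h : ∀ t : ℝ, 0 ≤ t → ContinuousWithinAt f (Set.Ici t) t) :
    ∀ t : ℝ, ContinuousWithinAt (fun u => f (max u 0)) (Set.Ici t) t := by
  intro t
  rcases le_or_gt 0 t with ht | ht
  · apply ContinuousWithinAt.congr (h t ht)
    · intro u hu
      show f (max u 0) = f u
      rw [max_eq_left (le_trans ht hu)]
    · show f (max t 0) = f t
      rw [max_eq_left ht]
  · apply ContinuousAt.continuousWithinAt
    have hev : (fun u : ℝ => f (max u 0)) =ᶠ[nhds t] (fun _ => f 0) := by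
      filter_upwards [Iio_mem_nhds ht] with u hu
      rw [max_eq_right (le_of_lt hu)]
    exact ContinuousAt.congr continuousAt_const hev.symm

lemma ll_max (f : ℝ → EuclideanSpace ℝ (Fin m))
    (h : ∀ t : ℝ, 0 < t → ∃ L, Tendsto f (nhdsWithin t (Set.Iio t)) (nhds L)) :
    ∀ t : ℝ, 0 < t →
      ∃ L, Tendsto (fun u => f (max u 0)) (nhdsWithin t (Set.Iio t)) (nhds L) := by
  intro t ht
  obtain ⟨L, hL⟩ := h t ht
  refine ⟨L, ?_⟩
  apply Tendsto.congr' _ hL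
  filter_upwards [nhdsWithin_le_nhds (Ioi_mem_nhds ht)] with u hu
  rw [max_eq_left (le_of_lt hu)]

end AuxLemmas

open Filter

/-- Skorohod convergence of the (uniformly bounded, RCLL) velocities
on `D[0,R]` for all `R < T`, together with convergence of the initial positions,
implies uniform convergence of the positions on `[0,T]`. -/
theorem uniform_convergence_of_skorohod {l : ℕ} (T C : ℝ) (hT : 0 < T) (hC : 0 < C)
    (Xk : ℕ → ℝ → EuclideanSpace ℝ (Fin l)) (Z : ℝ → EuclideanSpace ℝ (Fin l))
    (Vk : ℕ → ℝ → EuclideanSpace ℝ (Fin l)) (V : ℝ → EuclideanSpace ℝ (Fin l))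
    -- `Vk k` and `V` are right-continuous with left limits on `[0,∞)`
    (hVkrc : ∀ k, ∀ t : ℝ, 0 ≤ t → ContinuousWithinAt (Vk k) (Set.Ici t) t)
    (hVkll : ∀ k, ∀ t : ℝ, 0 < t →
      ∃ L, Filter.Tendsto (Vk k) (nhdsWithin t (Set.Iio t)) (nhds L))
    (hVrc : ∀ t : ℝ, 0 ≤ t → ContinuousWithinAt V (Set.Ici t) t)
    (hVll : ∀ t : ℝ, 0 < t → ∃ L, Filter.Tendsto V (nhdsWithin t (Set.Iio t)) (nhds L))
    -- uniform bound on the velocities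
    (hVkb : ∀ k, ∀ u : ℝ, 0 ≤ u → ‖Vk k u‖ ≤ C) (hVb : ∀ u : ℝ, 0 ≤ u → ‖V u‖ ≤ C)
    -- positions are integrals of the velocities
    (hXk : ∀ k, ∀ t : ℝ, 0 ≤ t → Xk k t = Xk k 0 + ∫ u in (0 : ℝ)..t, Vk k u)
    (hZ : ∀ t : ℝ, 0 ≤ t → Z t = Z 0 + ∫ u in (0 : ℝ)..t, V u)
    (h0 : Filter.Tendsto (fun k => Xk k 0) Filter.atTop (nhds (Z 0)))
    (hconv : ∀ R : ℝ, 0 < R → R < T → SkorohodTendsto R Vk V) :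
    TendstoUniformlyOn Xk Z Filter.atTop (Set.Icc 0 T) := by
  classical
  rw [Metric.tendstoUniformlyOn_iff]
  intro ε hε
  -- clamped versions of the velocities
  set VM : ℝ → EuclideanSpace ℝ (Fin l) := fun u => V (max u 0) with hVM
  set VkM : ℕ → ℝ → EuclideanSpace ℝ (Fin l) := fun k u => Vk k (max u 0) with hVkM
  have hVMrc := rc_max V hVrc
  have hVMm : Measurable VM := measurable_of_rc VM hVMrc
  have hVkMm : ∀ k, Measurable (VkM k) :=
    fun k => measurable_of_rc _ (rc_max (Vk k) (hVkrc k))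
  have hVMb : ∀ u, ‖VM u‖ ≤ C := fun u => hVb _ (le_max_right u 0)
  have hVkMb : ∀ k u, ‖VkM k u‖ ≤ C := fun k u => hVkb k _ (le_max_right u 0)
  -- choose R close to T
  set δ₀ : ℝ := min (T/2) (ε/(12*C)) with hδ₀
  have hδ₀pos : 0 < δ₀ := lt_min (by positivity) (by positivity)
  set R : ℝ := T - δ₀ with hR
  have hRpos : 0 < R := by
    have : δ₀ ≤ T/2 := min_le_left _ _
    rw [hR]; linarith
  have hRT : R < T := by rw [hR]; linarith
  have h2Cδ₀ : 2*C*(T-R) ≤ ε/6 := by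
    have h1 : δ₀ ≤ ε/(12*C) := min_le_right _ _
    have : T - R = δ₀ := by rw [hR]; ring
    rw [this]
    calc 2*C*δ₀ ≤ 2*C*(ε/(12*C)) := by
          apply mul_le_mul_of_nonneg_left h1 (by positivity)
      _ = ε/6 := by field_simp; ring
  -- a.e. continuity of VM on (0,R]
  have hae : ∀ᵐ u ∂(volume.restrict (Set.Ioc (0:ℝ) R)), ContinuousAt VM u := by
    rw [ae_restrict_iff' measurableSet_Ioc]
    have hnull : volume {t : ℝ | 0 < t ∧ ¬ ContinuousAt VM t} = 0 :=
      (countable_discont VM hVMrc (ll_max V hVll)).measure_zero _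
    rw [ae_iff]
    apply measure_mono_null _ hnull
    intro x hx
    rw [Set.mem_setOf_eq, Classical.not_imp] at hx
    exact ⟨hx.1.1, hx.2⟩
  -- the dominated convergence estimate
  obtain ⟨δ, hδpos, hδ⟩ := dct_lemma R C hRpos hC VM hVMm hVMb hae (ε/6) (by positivity)
  -- choose ε'
  set ε' : ℝ := min (ε/(6*(R+1))) (Real.log (1 + δ/R)) with hε'
  have hlogpos : 0 < Real.log (1 + δ/R) := Real.log_pos (by
    have : 0 < δ/R := by positivity
    linarith)
  have hε'pos : 0 < ε' := lt_min (by positivity) hlogpos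
  have hε'R : ε' * R ≤ ε/6 := by
    have h1 : ε' ≤ ε/(6*(R+1)) := min_le_left _ _
    have h2 : ε' * R ≤ (ε/(6*(R+1))) * R :=
      mul_le_mul_of_nonneg_right h1 hRpos.le
    have h3 : (ε/(6*(R+1))) * R ≤ ε/6 := by
      rw [div_mul_eq_mul_div, div_le_div_iff₀ (by positivity) (by positivity)]
      nlinarith
    linarith
  have hexpδ : (Real.exp ε' - 1) * R ≤ δ := by
    have h1 : ε' ≤ Real.log (1 + δ/R) := min_le_right _ _
    have h2 : Real.exp ε' ≤ 1 + δ/R := by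
      calc Real.exp ε' ≤ Real.exp (Real.log (1 + δ/R)) := Real.exp_le_exp.mpr h1
        _ = 1 + δ/R := Real.exp_log (by positivity)
    have h3 : (Real.exp ε' - 1) * R ≤ (δ/R) * R := by
      apply mul_le_mul_of_nonneg_right _ hRpos.le
      linarith
    rw [div_mul_cancel₀ δ hRpos.ne'] at h3
    exact h3
  -- Skorohod convergence on [0,R]
  obtain ⟨K, hK⟩ := hconv R hRpos hRT ε' hε'pos
  have hinit : ∀ᶠ k in atTop, dist (Xk k 0) (Z 0) < ε/6 :=
    Metric.tendsto_nhds.mp h0 (ε/6) (by positivity)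
  filter_upwards [hinit, eventually_ge_atTop K] with k hk0 hkK
  intro t ht
  obtain ⟨ht0, htT⟩ := ht
  obtain ⟨lam, ⟨hlmono, hlcont, hlimg⟩, hllog, hlclose⟩ := hK k hkK
  have h0mem : (0:ℝ) ∈ Set.Icc (0:ℝ) R := ⟨le_refl 0, hRpos.le⟩
  -- lam 0 = 0
  have hlam0 : lam 0 = 0 := by
    have h1 : lam 0 ∈ Set.Icc (0:ℝ) R := by
      rw [← hlimg]; exact Set.mem_image_of_mem _ h0mem
    have h2 : (0:ℝ) ∈ lam '' Set.Icc (0:ℝ) R := by rw [hlimg]; exact h0mem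
    obtain ⟨x, hx, hlx⟩ := h2
    have h3 : lam 0 ≤ lam x := by
      rcases eq_or_lt_of_le hx.1 with h | h
      · rw [h]
      · exact (hlmono h0mem hx h).le
    rw [hlx] at h3
    exact le_antisymm h3 h1.1
  have hlmem : ∀ u ∈ Set.Icc (0:ℝ) R, lam u ∈ Set.Icc (0:ℝ) R := by
    intro u hu
    rw [← hlimg]; exact Set.mem_image_of_mem _ hu
  -- |lam u - u| ≤ δ on [0,R]
  have hlclose' : ∀ u ∈ Set.Icc (0:ℝ) R, |lam u - u| ≤ δ := by
    intro u hu
    rcases eq_or_lt_of_le hu.1 with h | h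
    · rw [← h, hlam0]; simpa using hδpos.le
    · have hlog := hllog 0 u (le_refl 0) h hu.2
      rw [hlam0, sub_zero, sub_zero] at hlog
      have hlampos : 0 < lam u := by
        have := hlmono h0mem hu h
        rw [hlam0] at this; exact this
      set y : ℝ := lam u / u with hy
      have hypos : 0 < y := div_pos hlampos h
      have hyle : y ≤ Real.exp ε' := by
        have h1 : Real.log y ≤ ε' := (abs_le.mp hlog).2
        exact (Real.log_le_iff_le_exp hypos).mp h1
      have hyge : Real.exp (-ε') ≤ y := by
        have h1 : -ε' ≤ Real.log y := (abs_le.mp hlog).1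
        exact (Real.le_log_iff_exp_le hypos).mp h1
      have hlamu : lam u = y * u := by rw [hy]; field_simp
      have hub : lam u - u ≤ (Real.exp ε' - 1) * R := by
        rw [hlamu]
        have e1 : 1 ≤ Real.exp ε' := by
          rw [← Real.exp_zero]; exact Real.exp_le_exp.mpr hε'pos.le
        nlinarith [hu.2, h.le, hyle]
      have hlb : u - lam u ≤ (Real.exp ε' - 1) * R := by
        rw [hlamu]
        have e2 : 1 - Real.exp (-ε') ≤ Real.exp ε' - 1 := by
          have := Real.exp_neg ε'
          have hp := Real.exp_pos ε'
          rw [this]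
          rw [sub_le_sub_iff]
          have h4 : (Real.exp ε' - 1)^2 ≥ 0 := sq_nonneg _
          have h5 : Real.exp ε' * (Real.exp ε')⁻¹ = 1 := mul_inv_cancel₀ hp.ne'
          nlinarith
        nlinarith [hu.2, h.le, hyge, Real.exp_pos (-ε')]
      have habs : |lam u - u| ≤ (Real.exp ε' - 1) * R :=
        abs_le.mpr ⟨by linarith, by linarith⟩
      exact le_trans habs hexpδ
  -- the time change, extended to ℝ
  set φ : ℝ → ℝ := Set.piecewise (Set.Icc 0 R) (fun u => lam (max 0 (min u R))) id with hφ
  have hclampcont : Continuous (fun u : ℝ => max 0 (min u R)) :=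
    continuous_const.max (continuous_id.min continuous_const)
  have hclampmem : ∀ u : ℝ, max 0 (min u R) ∈ Set.Icc (0:ℝ) R := by
    intro u
    exact ⟨le_max_left _ _, max_le hRpos.le (min_le_right u R)⟩
  have hφm : Measurable φ := by
    apply Measurable.piecewise measurableSet_Icc _ measurable_id
    exact (hlcont.comp_continuous hclampcont hclampmem).measurable
  have hφeq : ∀ u ∈ Set.Icc (0:ℝ) R, φ u = lam u := by
    intro u hu
    rw [hφ, Set.piecewise_eq_of_mem _ _ _ hu]
    show lam (max 0 (min u R)) = lam u
    rw [min_eq_left hu.2, max_eq_right hu.1]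
  have hφδ : ∀ u, |φ u - u| ≤ δ := by
    intro u
    by_cases hu : u ∈ Set.Icc (0:ℝ) R
    · rw [hφeq u hu]; exact hlclose' u hu
    · rw [hφ, Set.piecewise_eq_of_notMem _ _ _ hu]
      simp [hδpos.le]
  -- integral estimates on (0,R]
  have hI2 : ∫ u in Set.Ioc (0:ℝ) R, ‖VM (φ u) - VM u‖ ≤ ε/6 := hδ φ hφm hφδ
  have hpt : ∀ u ∈ Set.Ioc (0:ℝ) R, ‖VkM k u - VM (φ u)‖ ≤ ε' := by
    intro u hu
    have humem : u ∈ Set.Icc (0:ℝ) R := ⟨hu.1.le, hu.2⟩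
    have h1 : VkM k u = Vk k u := by rw [hVkM]; simp [max_eq_left hu.1.le]
    have h2 : VM (φ u) = V (lam u) := by
      rw [hφeq u humem, hVM]
      simp [max_eq_left (hlmem u humem).1]
    rw [h1, h2]
    exact hlclose u humem
  -- measurable integrands
  have hgm : Measurable (fun u => ‖VM u - VkM k u‖) :=
    (hVMm.sub (hVkMm k)).norm
  have hgb : ∀ u, |‖VM u - VkM k u‖| ≤ 2*C := by
    intro u
    rw [abs_of_nonneg (norm_nonneg _)]
    have := norm_sub_le (VM u) (VkM k u)
    have := hVMb u
    have := hVkMb k u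
    linarith [norm_sub_le (VM u) (VkM k u), hVMb u, hVkMb k u]
  have hh1m : Measurable (fun u => ‖VkM k u - VM (φ u)‖) :=
    ((hVkMm k).sub (hVMm.comp hφm)).norm
  have hh1b : ∀ u, |‖VkM k u - VM (φ u)‖| ≤ 2*C := by
    intro u
    rw [abs_of_nonneg (norm_nonneg _)]
    linarith [norm_sub_le (VkM k u) (VM (φ u)), hVkMb k u, hVMb (φ u)]
  have hh2m : Measurable (fun u => ‖VM (φ u) - VM u‖) :=
    ((hVMm.comp hφm).sub hVMm).norm
  have hh2b : ∀ u, |‖VM (φ u) - VM u‖| ≤ 2*C := by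
    intro u
    rw [abs_of_nonneg (norm_nonneg _)]
    linarith [norm_sub_le (VM (φ u)) (VM u), hVMb (φ u), hVMb u]
  have hint_g : IntegrableOn (fun u => ‖VM u - VkM k u‖) (Set.Ioc (0:ℝ) R) :=
    integrableOn_bdd' _ (2*C) hgm hgb 0 R
  have hint_h1 : IntegrableOn (fun u => ‖VkM k u - VM (φ u)‖) (Set.Ioc (0:ℝ) R) :=
    integrableOn_bdd' _ (2*C) hh1m hh1b 0 R
  have hint_h2 : IntegrableOn (fun u => ‖VM (φ u) - VM u‖) (Set.Ioc (0:ℝ) R) :=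
    integrableOn_bdd' _ (2*C) hh2m hh2b 0 R
  -- main set-integral bound on (0,R]
  have hIR : ∫ u in Set.Ioc (0:ℝ) R, ‖VM u - VkM k u‖ ≤ ε/6 + ε/6 := by
    have hptw : ∀ u ∈ Set.Ioc (0:ℝ) R,
        ‖VM u - VkM k u‖ ≤ ‖VkM k u - VM (φ u)‖ + ‖VM (φ u) - VM u‖ := by
      intro u _
      have htri := dist_triangle (VkM k u) (VM (φ u)) (VM u)
      rw [dist_eq_norm, dist_eq_norm, dist_eq_norm] at htri
      rw [norm_sub_rev]
      exact htri
    have hstep1 : ∫ u in Set.Ioc (0:ℝ) R, ‖VM u - VkM k u‖ ≤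
        ∫ u in Set.Ioc (0:ℝ) R, (‖VkM k u - VM (φ u)‖ + ‖VM (φ u) - VM u‖) :=
      setIntegral_mono_on hint_g (hint_h1.add hint_h2) measurableSet_Ioc hptw
    have hstep2 : ∫ u in Set.Ioc (0:ℝ) R, (‖VkM k u - VM (φ u)‖ + ‖VM (φ u) - VM u‖)
        = (∫ u in Set.Ioc (0:ℝ) R, ‖VkM k u - VM (φ u)‖) +
          ∫ u in Set.Ioc (0:ℝ) R, ‖VM (φ u) - VM u‖ :=
      integral_add hint_h1 hint_h2
    have hstep3 : ∫ u in Set.Ioc (0:ℝ) R, ‖VkM k u - VM (φ u)‖ ≤ ε' * R := by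
      have hconstint : IntegrableOn (fun _ : ℝ => ε') (Set.Ioc (0:ℝ) R) := by
        haveI : IsFiniteMeasure (volume.restrict (Set.Ioc (0:ℝ) R)) := by
          constructor
          rw [Measure.restrict_apply_univ, Real.volume_Ioc]
          exact ENNReal.ofReal_lt_top
        exact integrable_const ε'
      have := setIntegral_mono_on hint_h1 hconstint measurableSet_Ioc hpt
      rw [setIntegral_const] at this
      rw [Real.volume_real_Ioc, max_eq_left (by linarith), smul_eq_mul, sub_zero] at this
      linarith [this]
    calc ∫ u in Set.Ioc (0:ℝ) R, ‖VM u - VkM k u‖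
        ≤ ∫ u in Set.Ioc (0:ℝ) R, (‖VkM k u - VM (φ u)‖ + ‖VM (φ u) - VM u‖) := hstep1
      _ = (∫ u in Set.Ioc (0:ℝ) R, ‖VkM k u - VM (φ u)‖) +
          ∫ u in Set.Ioc (0:ℝ) R, ‖VM (φ u) - VM u‖ := hstep2
      _ ≤ ε' * R + ε/6 := add_le_add hstep3 hI2
      _ ≤ ε/6 + ε/6 := by linarith [hε'R]
  -- interval integrals
  have hgint : ∀ a b : ℝ, IntervalIntegrable (fun u => ‖VM u - VkM k u‖) volume a b :=
    intervalIntegrable_bdd' _ (2*C) hgm hgb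
  have hIRint : ∫ u in (0:ℝ)..R, ‖VM u - VkM k u‖ =
      ∫ u in Set.Ioc (0:ℝ) R, ‖VM u - VkM k u‖ :=
    intervalIntegral.integral_of_le hRpos.le
  -- I(t) ≤ I(R) + ε/6 for t ∈ [0,T]
  have hIt : ∫ u in (0:ℝ)..t, ‖VM u - VkM k u‖ ≤
      (∫ u in (0:ℝ)..R, ‖VM u - VkM k u‖) + ε/6 := by
    rcases le_or_gt t R with hcase | hcase
    · have hsplit := intervalIntegral.integral_add_adjacent_intervals
        (hgint 0 t) (hgint t R)
      have hnn : 0 ≤ ∫ u in t..R, ‖VM u - VkM k u‖ :=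
        intervalIntegral.integral_nonneg hcase (fun u _ => norm_nonneg _)
      have hεnn : (0:ℝ) ≤ ε/6 := by positivity
      linarith [hsplit]
    · have hsplit := intervalIntegral.integral_add_adjacent_intervals
        (hgint 0 R) (hgint R t)
      have htail : ∫ u in R..t, ‖VM u - VkM k u‖ ≤ ∫ u in R..t, (2*C : ℝ) := by
        apply intervalIntegral.integral_mono_on hcase.le (hgint R t)
          intervalIntegrable_const
        intro u _
        have := hgb u
        rw [abs_of_nonneg (norm_nonneg _)] at this
        exact this
      rw [intervalIntegral.integral_const, smul_eq_mul] at htail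
      have hbound : (t - R) * (2*C) ≤ ε/6 := by
        have h1 : t - R ≤ T - R := by linarith
        have h2 : (t - R) * (2*C) ≤ (T - R) * (2*C) :=
          mul_le_mul_of_nonneg_right h1 (by positivity)
        have h3 : (T - R) * (2*C) = 2*C*(T-R) := by ring
        linarith [h2, h2Cδ₀, h3]
      rw [← hsplit]
      have htail' := le_trans htail hbound
      gcongr
  -- rewrite interval integrals of V, Vk as VM, VkM
  have hVcongr : ∫ u in (0:ℝ)..t, V u = ∫ u in (0:ℝ)..t, VM u := by
    apply intervalIntegral.integral_congr
    intro u hu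
    rw [Set.uIcc_of_le ht0] at hu
    rw [hVM]; simp [max_eq_left hu.1]
  have hVkcongr : ∫ u in (0:ℝ)..t, Vk k u = ∫ u in (0:ℝ)..t, VkM k u := by
    apply intervalIntegral.integral_congr
    intro u hu
    rw [Set.uIcc_of_le ht0] at hu
    rw [hVkM]; simp [max_eq_left hu.1]
  -- final chain
  have hdiff : Z t - Xk k t = (Z 0 - Xk k 0) +
      ((∫ u in (0:ℝ)..t, VM u) - ∫ u in (0:ℝ)..t, VkM k u) := by
    rw [hZ t ht0, hXk k t ht0, hVcongr, hVkcongr]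
    abel
  have hsubint : (∫ u in (0:ℝ)..t, VM u) - (∫ u in (0:ℝ)..t, VkM k u)
      = ∫ u in (0:ℝ)..t, (VM u - VkM k u) :=
    (intervalIntegral.integral_sub (intervalIntegrable_bdd _ C hVMm hVMb 0 t)
      (intervalIntegrable_bdd _ C (hVkMm k) (hVkMb k) 0 t)).symm
  have hnormint : ‖∫ u in (0:ℝ)..t, (VM u - VkM k u)‖ ≤
      ∫ u in (0:ℝ)..t, ‖VM u - VkM k u‖ :=
    intervalIntegral.norm_integral_le_integral_norm ht0
  have hfinal : dist (Z t) (Xk k t) ≤ dist (Z 0) (Xk k 0) +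
      ∫ u in (0:ℝ)..t, ‖VM u - VkM k u‖ := by
    rw [dist_eq_norm, dist_eq_norm, hdiff]
    calc ‖(Z 0 - Xk k 0) + ((∫ u in (0:ℝ)..t, VM u) - ∫ u in (0:ℝ)..t, VkM k u)‖
        ≤ ‖Z 0 - Xk k 0‖ + ‖(∫ u in (0:ℝ)..t, VM u) - ∫ u in (0:ℝ)..t, VkM k u‖ :=
          norm_add_le _ _
      _ ≤ ‖Z 0 - Xk k 0‖ + ∫ u in (0:ℝ)..t, ‖VM u - VkM k u‖ := by
          rw [hsubint]; linarith [hnormint]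
  have hd0 : dist (Z 0) (Xk k 0) < ε/6 := by
    rw [dist_comm]; exact hk0
  rw [hIRint] at hIt
  have hε'Rfinal : ε' * R ≤ ε/6 := hε'R
  calc dist (Z t) (Xk k t)
      ≤ dist (Z 0) (Xk k 0) + ∫ u in (0:ℝ)..t, ‖VM u - VkM k u‖ := hfinal
    _ ≤ dist (Z 0) (Xk k 0) + ((∫ u in Set.Ioc (0:ℝ) R, ‖VM u - VkM k u‖) + ε/6) := by
        linarith [hIt]
    _ < ε/6 + ((ε/6 + ε/6) + ε/6) := by
        have := hIR
        linarith [hd0, hIR]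
    _ ≤ ε := by linarith
end
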